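/- arXiv:1505.07906 — 11 statements merged into one kernel-verified Lean document; each statement's English description precedes it below -/
import Mathlib

section
/- A sequence σ : ℤ≥0 → ℂ is Lipschitz continuous with respect to the metric ρ(m,n) = |√m − √n| if and only if sup over n of √(n+1)·|σ(n+1) − σ(n)| is finite. Moreover, if that supremum equals M, then |σ(m) − σ(n)| ≤ 2M·ρ(m,n) for all m, n. -/
private lemma key_aux (σ : ℕ → ℂ) (M : ℝ)
    (h : ∀ n : ℕ, Real.sqrt (n + 1) * ‖σ (n + 1) - σ n‖ ≤ M) (n : ℕ) :
    ∀ m : ℕ, n ≤ m → ‖σ m - σ n‖ ≤ 2 * M * (Real.sqrt m - Real.sqrt n) := by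
  have hM : 0 ≤ M := le_trans (by positivity) (h 0)
  intro m hm
  induction m, hm using Nat.le_induction with
  | base => simp
  | succ k hk ih =>
    have hs : Real.sqrt (k + 1) ^ 2 = (k : ℝ) + 1 := Real.sq_sqrt (by positivity)
    have ht : Real.sqrt k ^ 2 = (k : ℝ) := Real.sq_sqrt (by positivity)
    have hs1 : (1 : ℝ) ≤ Real.sqrt (k + 1) := by
      have h1 : Real.sqrt 1 ≤ Real.sqrt ((k : ℝ) + 1) :=
        Real.sqrt_le_sqrt (by have := Nat.cast_nonneg (α := ℝ) k; linarith)
      rwa [Real.sqrt_one] at h1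
    have hst : Real.sqrt k ≤ Real.sqrt (k + 1) := Real.sqrt_le_sqrt (by linarith)
    have ht0 : 0 ≤ Real.sqrt k := Real.sqrt_nonneg _
    have hA : 0 ≤ ‖σ (k + 1) - σ k‖ := norm_nonneg _
    have hk' := h k
    have step : ‖σ (k + 1) - σ k‖ ≤
        2 * M * (Real.sqrt (k + 1) - Real.sqrt k) := by
      nlinarith [sq_nonneg (Real.sqrt (k + 1) - Real.sqrt k),
        mul_nonneg hM (sub_nonneg.2 hst),
        mul_nonneg hA (sub_nonneg.2 hst)]
    have tri : ‖σ (k + 1) - σ n‖ ≤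
        ‖σ (k + 1) - σ k‖ + ‖σ k - σ n‖ := by
      have := norm_add_le (σ (k + 1) - σ k) (σ k - σ n)
      simpa using this
    have hcast : (((k + 1 : ℕ) : ℝ)) = (k : ℝ) + 1 := by push_cast; ring
    rw [hcast]
    linarith [ih]

theorem stmt_0 (σ : ℕ → ℂ) :
    ((∃ C : ℝ, ∀ m n : ℕ, ‖σ m - σ n‖ ≤ C * |Real.sqrt m - Real.sqrt n|) ↔
      (∃ M : ℝ, ∀ n : ℕ, Real.sqrt (n + 1) * ‖σ (n + 1) - σ n‖ ≤ M)) ∧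
    (∀ M : ℝ, (∀ n : ℕ, Real.sqrt (n + 1) * ‖σ (n + 1) - σ n‖ ≤ M) →
      ∀ m n : ℕ, ‖σ m - σ n‖ ≤ 2 * M * |Real.sqrt m - Real.sqrt n|) := by
  have main : ∀ M : ℝ, (∀ n : ℕ, Real.sqrt (n + 1) * ‖σ (n + 1) - σ n‖ ≤ M) →
      ∀ m n : ℕ, ‖σ m - σ n‖ ≤ 2 * M * |Real.sqrt m - Real.sqrt n| := by
    intro M h m n
    rcases le_total n m with hnm | hmn
    · have := key_aux σ M h n m hnm
      rwa [abs_of_nonneg (sub_nonneg.2 (Real.sqrt_le_sqrt (by exact_mod_cast hnm)))]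
    · have := key_aux σ M h m n hmn
      rw [abs_sub_comm, abs_of_nonneg (sub_nonneg.2 (Real.sqrt_le_sqrt (by exact_mod_cast hmn)))]
      rwa [← norm_neg, neg_sub]
  refine ⟨⟨?_, ?_⟩, main⟩
  · rintro ⟨C, hC⟩
    refine ⟨|C|, fun n => ?_⟩
    have hs : Real.sqrt (n + 1) ^ 2 = (n : ℝ) + 1 := Real.sq_sqrt (by positivity)
    have ht : Real.sqrt n ^ 2 = (n : ℝ) := Real.sq_sqrt (by positivity)
    have hst : Real.sqrt n ≤ Real.sqrt (n + 1) := Real.sqrt_le_sqrt (by linarith)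
    have ht0 : 0 ≤ Real.sqrt n := Real.sqrt_nonneg _
    have hs0 : 0 ≤ Real.sqrt (n + 1) := Real.sqrt_nonneg _
    have hA : 0 ≤ ‖σ (n + 1) - σ n‖ := norm_nonneg _
    have hC' := hC (n + 1) n
    rw [show (((n + 1 : ℕ)) : ℝ) = (n : ℝ) + 1 by push_cast; ring,
      abs_of_nonneg (sub_nonneg.2 hst)] at hC'
    have hCabs : C ≤ |C| := le_abs_self C
    nlinarith [sq_nonneg (Real.sqrt (n + 1) - Real.sqrt n), abs_nonneg C,
      mul_nonneg hs0 hA, mul_nonneg (abs_nonneg C) (sub_nonneg.2 hst)]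
  · rintro ⟨M, hM⟩
    exact ⟨2 * M, fun m n => main M hM m n⟩
end

section
/- Let σ : ℤ≥0 → ℂ and let f be its piecewise interpolation with respect to the parameter √x, i.e., f(x) = σ(n) + ((√x − √n)/(√(n+1) − √n))·(σ(n+1) − σ(n)) with n = ⌊x⌋. Then for every δ ∈ (0,1], the modulus of continuity of f with respect to the metric ρ(x,y) = |√x − √y| satisfies ω_{ρ,f}(δ) ≤ 3·max(ω_{ρ,σ}(√δ), √δ·ω_{ρ,σ}(1)). -/
open scoped ENNReal NNReal

/-- Modulus of continuity of a function on `[0,∞)` with respect to `ρ(x,y)=|√x−√y|`. -/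
noncomputable def omegaF (f : ℝ → ℂ) (δ : ℝ) : ℝ≥0∞ :=
  ⨆ (x : ℝ) (y : ℝ) (_ : 0 ≤ x) (_ : 0 ≤ y) (_ : |Real.sqrt x - Real.sqrt y| ≤ δ),
    (‖f x - f y‖₊ : ℝ≥0∞)

/-- Modulus of continuity of a sequence with respect to `ρ(m,n)=|√m−√n|`. -/
noncomputable def omegaS (σ : ℕ → ℂ) (δ : ℝ) : ℝ≥0∞ :=
  ⨆ (m : ℕ) (n : ℕ) (_ : |Real.sqrt m - Real.sqrt n| ≤ δ), (‖σ m - σ n‖₊ : ℝ≥0∞)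

lemma hS_aux (σ : ℕ → ℂ) (a b : ℕ) (t : ℝ) (h : |Real.sqrt a - Real.sqrt b| ≤ t) :
    (‖σ a - σ b‖₊ : ℝ≥0∞) ≤ omegaS σ t :=
  le_iSup_of_le a (le_iSup_of_le b (le_iSup_of_le h le_rfl))

lemma ofReal_norm_eq_coe_nnnorm {E : Type*} [SeminormedAddGroup E] (a : E) :
    ENNReal.ofReal ‖a‖ = (‖a‖₊ : ℝ≥0∞) :=
  ofReal_norm a

lemma step_pos (n : ℕ) : 0 < Real.sqrt (n + 1) - Real.sqrt n := by
  have := Real.sqrt_lt_sqrt (Nat.cast_nonneg n) (by linarith : (n : ℝ) < n + 1)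
  linarith

lemma step_le_one (n : ℕ) : Real.sqrt (n + 1) - Real.sqrt n ≤ 1 := by
  have h1 : Real.sqrt ((n : ℝ) + 1) ≤ Real.sqrt ((Real.sqrt n + 1) ^ 2) := by
    apply Real.sqrt_le_sqrt
    have := Real.sq_sqrt (Nat.cast_nonneg n : (0:ℝ) ≤ n)
    nlinarith [Real.sqrt_nonneg (n : ℝ)]
  rw [Real.sqrt_sq (by positivity)] at h1
  linarith

lemma keyL (σ : ℕ → ℂ) (δ : ℝ) (hδ0 : 0 < δ) (n : ℕ) (c : ℝ)
    (hc1 : |c| ≤ 1) (hc2 : |c| * (Real.sqrt (n + 1) - Real.sqrt n) ≤ δ) :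
    (‖(c : ℂ) * (σ (n + 1) - σ n)‖₊ : ℝ≥0∞) ≤
      max (omegaS σ (Real.sqrt δ)) (ENNReal.ofReal (Real.sqrt δ) * omegaS σ 1) := by
  have hs0 := step_pos n
  have hs1 := step_le_one n
  have hnorm : ‖(c : ℂ) * (σ (n + 1) - σ n)‖ = |c| * ‖σ (n + 1) - σ n‖ := by
    rw [norm_mul, Complex.norm_real, Real.norm_eq_abs]
  by_cases h : Real.sqrt (n + 1) - Real.sqrt n ≤ Real.sqrt δ
  · refine le_trans ?_ (le_max_left _ _)
    refine le_trans ?_ (hS_aux σ (n+1) n (Real.sqrt δ) ?_)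
    · rw [← ofReal_norm_eq_coe_nnnorm, ← ofReal_norm_eq_coe_nnnorm]
      apply ENNReal.ofReal_le_ofReal
      rw [hnorm]
      nlinarith [norm_nonneg (σ (n+1) - σ n), abs_nonneg c]
    · push_cast
      rw [abs_of_nonneg (by linarith)]
      exact h
  · refine le_trans ?_ (le_max_right _ _)
    push_neg at h
    have hcδ : |c| ≤ Real.sqrt δ := by
      have hsq : Real.sqrt δ * Real.sqrt δ = δ := Real.mul_self_sqrt hδ0.le
      have hδs : 0 < Real.sqrt δ := Real.sqrt_pos.2 hδ0
      nlinarith [abs_nonneg c]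
    rw [← ofReal_norm_eq_coe_nnnorm]
    have h1 : ‖(c : ℂ) * (σ (n + 1) - σ n)‖ ≤ Real.sqrt δ * ‖σ (n + 1) - σ n‖ := by
      rw [hnorm]
      exact mul_le_mul_of_nonneg_right hcδ (norm_nonneg _)
    refine le_trans (ENNReal.ofReal_le_ofReal h1) ?_
    rw [ENNReal.ofReal_mul (Real.sqrt_nonneg δ)]
    refine mul_le_mul_right ?_ _
    rw [ofReal_norm_eq_coe_nnnorm]
    refine hS_aux σ (n+1) n 1 ?_
    push_cast
    rw [abs_of_nonneg (by linarith)]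
    exact hs1

theorem stmt_4 (σ : ℕ → ℂ) (f : ℝ → ℂ)
    (hf : ∀ x : ℝ, 0 ≤ x →
      f x = σ ⌊x⌋₊ +
        (((Real.sqrt x - Real.sqrt ⌊x⌋₊) /
          (Real.sqrt (⌊x⌋₊ + 1) - Real.sqrt ⌊x⌋₊) : ℝ) : ℂ) * (σ (⌊x⌋₊ + 1) - σ ⌊x⌋₊))
    (δ : ℝ) (hδ : δ ∈ Set.Ioc (0 : ℝ) 1) :
    omegaF f δ ≤
      3 * max (omegaS σ (Real.sqrt δ)) (ENNReal.ofReal (Real.sqrt δ) * omegaS σ 1) := by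
  obtain ⟨hδ0, hδ1⟩ := hδ
  set M := max (omegaS σ (Real.sqrt δ)) (ENNReal.ofReal (Real.sqrt δ) * omegaS σ 1) with hM
  -- key pointwise bound for x ≤ y
  have key : ∀ x y : ℝ, 0 ≤ x → x ≤ y → Real.sqrt y - Real.sqrt x ≤ δ →
      (‖f x - f y‖₊ : ℝ≥0∞) ≤ 3 * M := by
    intro x y hx hxy hd
    have hy : 0 ≤ y := hx.trans hxy
    set n := ⌊x⌋₊ with hn
    set m := ⌊y⌋₊ with hm
    have hnm : n ≤ m := Nat.floor_mono hxy
    have hxn : (n : ℝ) ≤ x := Nat.floor_le hx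
    have hxn1 : x < n + 1 := Nat.lt_floor_add_one x
    have hym : (m : ℝ) ≤ y := Nat.floor_le hy
    have hym1 : y < m + 1 := Nat.lt_floor_add_one y
    have hsxn : Real.sqrt n ≤ Real.sqrt x := Real.sqrt_le_sqrt hxn
    have hsxn1 : Real.sqrt x < Real.sqrt (n + 1) := Real.sqrt_lt_sqrt hx hxn1
    have hsym : Real.sqrt m ≤ Real.sqrt y := Real.sqrt_le_sqrt hym
    have hsym1 : Real.sqrt y < Real.sqrt (m + 1) := Real.sqrt_lt_sqrt hy hym1
    have hsxy : Real.sqrt x ≤ Real.sqrt y := Real.sqrt_le_sqrt hxy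
    have hsn0 := step_pos n
    have hsm0 := step_pos m
    have hMle : M ≤ 3 * M := by
      calc M = 1 * M := (one_mul M).symm
        _ ≤ 3 * M := mul_le_mul_left (by norm_num) M
    rcases eq_or_lt_of_le hnm with heq | hlt
    · -- same interval
      have hfeq : f x - f y =
          (((Real.sqrt x - Real.sqrt y) / (Real.sqrt (n + 1) - Real.sqrt n) : ℝ) : ℂ)
            * (σ (n + 1) - σ n) := by
        rw [hf x hx, hf y hy, ← hn, ← hm, ← heq]
        have hne : ((Real.sqrt (n + 1) : ℂ) - Real.sqrt n) ≠ 0 := by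
          intro hcon
          have : (Real.sqrt (n + 1) - Real.sqrt n : ℝ) = 0 := by
            exact_mod_cast (by push_cast at hcon ⊢; exact_mod_cast hcon : ((Real.sqrt (n+1) - Real.sqrt n : ℝ) : ℂ) = 0)
          linarith
        push_cast
        field_simp
        ring
      rw [hfeq]
      refine le_trans (keyL σ δ hδ0 n _ ?_ ?_) hMle
      · rw [abs_div, abs_of_pos hsn0, div_le_one hsn0, abs_sub_comm,
          abs_of_nonneg (by linarith)]
        have : Real.sqrt y < Real.sqrt (n + 1) := by
          have hyn : y < (n : ℝ) + 1 := by rw [heq]; exact hym1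
          exact Real.sqrt_lt_sqrt hy hyn
        linarith
      · rw [abs_div, abs_of_pos hsn0, div_mul_cancel₀ _ (ne_of_gt hsn0), abs_sub_comm,
          abs_of_nonneg (by linarith)]
        exact hd
    · -- different intervals: n + 1 ≤ m
      have hm1 : (n : ℝ) + 1 ≤ m := by exact_mod_cast hlt
      have hsnm : Real.sqrt ((n : ℝ) + 1) ≤ Real.sqrt m := Real.sqrt_le_sqrt hm1
      -- term 1
      have hA : f x - σ (n + 1) =
          (((Real.sqrt x - Real.sqrt (n + 1)) / (Real.sqrt (n + 1) - Real.sqrt n) : ℝ) : ℂ)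
            * (σ (n + 1) - σ n) := by
        rw [hf x hx, ← hn]
        have hne : ((Real.sqrt (n + 1) : ℂ) - Real.sqrt n) ≠ 0 := by
          intro hcon
          have : ((Real.sqrt (n+1) - Real.sqrt n : ℝ) : ℂ) = 0 := by push_cast; exact_mod_cast hcon
          have : (Real.sqrt (n + 1) - Real.sqrt n : ℝ) = 0 := by exact_mod_cast this
          linarith
        push_cast
        field_simp
        ring
      have hC : σ m - f y =
          (((Real.sqrt m - Real.sqrt y) / (Real.sqrt (m + 1) - Real.sqrt m) : ℝ) : ℂ)
            * (σ (m + 1) - σ m) := by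
        rw [hf y hy, ← hm]
        push_cast
        ring
      have hAle : (‖f x - σ (n + 1)‖₊ : ℝ≥0∞) ≤ M := by
        rw [hA]
        refine keyL σ δ hδ0 n _ ?_ ?_
        · rw [abs_div, abs_of_pos hsn0, div_le_one hsn0, abs_sub_comm,
            abs_of_nonneg (by linarith)]
          linarith
        · rw [abs_div, abs_of_pos hsn0, div_mul_cancel₀ _ (ne_of_gt hsn0), abs_sub_comm,
            abs_of_nonneg (by linarith)]
          linarith
      have hCle : (‖σ m - f y‖₊ : ℝ≥0∞) ≤ M := by
        rw [hC]
        refine keyL σ δ hδ0 m _ ?_ ?_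
        · rw [abs_div, abs_of_pos hsm0, div_le_one hsm0, abs_sub_comm,
            abs_of_nonneg (by linarith)]
          linarith
        · rw [abs_div, abs_of_pos hsm0, div_mul_cancel₀ _ (ne_of_gt hsm0), abs_sub_comm,
            abs_of_nonneg (by linarith)]
          linarith
      have hBle : (‖σ (n + 1) - σ m‖₊ : ℝ≥0∞) ≤ M := by
        refine le_trans (hS_aux σ (n + 1) m (Real.sqrt δ) ?_) (le_max_left _ _)
        have hδsq : δ ≤ Real.sqrt δ := by
          have h1 : Real.sqrt δ ≤ 1 := Real.sqrt_le_one.2 hδ1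
          have h2 : Real.sqrt δ * Real.sqrt δ = δ := Real.mul_self_sqrt hδ0.le
          nlinarith [Real.sqrt_nonneg δ]
        push_cast
        rw [abs_sub_comm, abs_of_nonneg (by linarith)]
        linarith
      have tri : ‖f x - f y‖ ≤ ‖f x - σ (n + 1)‖ + ‖σ (n + 1) - σ m‖ + ‖σ m - f y‖ := by
        have h1 : f x - f y = (f x - σ (n + 1)) + ((σ (n + 1) - σ m) + (σ m - f y)) := by ring
        rw [h1]
        calc ‖_ + _‖ ≤ ‖f x - σ (n + 1)‖ + ‖(σ (n + 1) - σ m) + (σ m - f y)‖ :=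
              norm_add_le _ _
          _ ≤ ‖f x - σ (n + 1)‖ + (‖σ (n + 1) - σ m‖ + ‖σ m - f y‖) := by
              gcongr; exact norm_add_le _ _
          _ = _ := by ring
      calc (‖f x - f y‖₊ : ℝ≥0∞)
          = ENNReal.ofReal ‖f x - f y‖ := (ofReal_norm_eq_coe_nnnorm _).symm
        _ ≤ ENNReal.ofReal (‖f x - σ (n + 1)‖ + ‖σ (n + 1) - σ m‖ + ‖σ m - f y‖) :=
            ENNReal.ofReal_le_ofReal tri
        _ ≤ (‖f x - σ (n + 1)‖₊ : ℝ≥0∞) + ‖σ (n + 1) - σ m‖₊ + ‖σ m - f y‖₊ := by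
            rw [ENNReal.ofReal_add (by positivity) (norm_nonneg _),
              ENNReal.ofReal_add (by positivity) (norm_nonneg _),
              ofReal_norm_eq_coe_nnnorm, ofReal_norm_eq_coe_nnnorm, ofReal_norm_eq_coe_nnnorm]
        _ ≤ M + M + M := by gcongr
        _ = 3 * M := by ring
  refine iSup_le fun x => iSup_le fun y => iSup_le fun hx => iSup_le fun hy =>
    iSup_le fun hxy => ?_
  rcases le_total x y with h | h
  · refine key x y hx h ?_
    have := abs_le.1 hxy
    rw [abs_sub_comm] at hxy
    have := abs_le.1 hxy
    linarith [this.2]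
  · rw [show f x - f y = -(f y - f x) by ring, nnnorm_neg]
    refine key y x hy h ?_
    have := abs_le.1 hxy
    linarith [this.2]
end

section
/- Every bounded sequence σ : ℤ≥0 → ℂ that is uniformly continuous with respect to the metric ρ(m,n) = |√m − √n| extends to a bounded function f : [0,∞) → ℂ that is uniformly continuous with respect to the metric ρ(x,y) = |√x − √y| and satisfies f(n) = σ(n) for every n ∈ ℤ≥0 and sup|f| = sup|σ|. -/
set_option maxHeartbeats 1000000

noncomputable def itp (σ : ℕ → ℂ) (x : ℝ) : ℂ :=
  σ ⌊x⌋₊ + ((x - ⌊x⌋₊ : ℝ) : ℂ) * (σ (⌊x⌋₊ + 1) - σ ⌊x⌋₊)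

lemma itp_nat (σ : ℕ → ℂ) (n : ℕ) : itp σ n = σ n := by
  simp [itp]

lemma sqrt_sub_le {a b : ℝ} (ha : 0 ≤ a) (hab : a ≤ b) :
    Real.sqrt b - Real.sqrt a ≤ (b - a) / Real.sqrt b := by
  rcases eq_or_lt_of_le (ha.trans hab) with h | h
  · have hb0 : b = 0 := h.symm
    have ha0 : a = 0 := le_antisymm (hb0 ▸ hab) ha
    simp [ha0, hb0]
  · have hsb : 0 < Real.sqrt b := Real.sqrt_pos.2 h
    rw [le_div_iff₀ hsb]
    have h1 : Real.sqrt a * Real.sqrt b ≥ a := by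
      nlinarith [Real.mul_self_sqrt ha, Real.sqrt_le_sqrt hab, Real.sqrt_nonneg a]
    nlinarith [Real.mul_self_sqrt (ha.trans hab)]

lemma itp_lip (σ : ℕ → ℂ) (C : ℝ) (hC : ∀ n, ‖σ n‖ ≤ C)
    {x y : ℝ} (hx : 0 ≤ x) (hxy : x ≤ y) (hy1 : y ≤ x + 1) :
    ‖itp σ x - itp σ y‖ ≤ 2 * C * (y - x) := by
  have hC0 : 0 ≤ C := (norm_nonneg _).trans (hC 0)
  have hy0 : 0 ≤ y := hx.trans hxy
  set m := ⌊x⌋₊ with hm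
  have hmx : (m : ℝ) ≤ x := Nat.floor_le hx
  have hxm : x < m + 1 := Nat.lt_floor_add_one x
  have hmy : (m : ℝ) ≤ y := hmx.trans hxy
  have hcase : ⌊y⌋₊ = m ∨ ⌊y⌋₊ = m + 1 := by
    have h1 : m ≤ ⌊y⌋₊ := Nat.floor_le_floor hxy
    have h2 : ⌊y⌋₊ < m + 2 := by
      rw [Nat.floor_lt hy0]; push_cast; linarith
    omega
  have hd : ∀ k l : ℕ, ‖σ k - σ l‖ ≤ 2 * C := fun k l =>
    (norm_sub_le _ _).trans (by linarith [hC k, hC l])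
  rcases hcase with h | h
  · have : itp σ x - itp σ y = ((x - y : ℝ) : ℂ) * (σ (m + 1) - σ m) := by
      simp only [itp, h, ← hm]; push_cast; ring
    rw [this, norm_mul, Complex.norm_real, Real.norm_eq_abs, abs_of_nonpos (by linarith), neg_sub]
    calc (y - x) * ‖σ (m + 1) - σ m‖ ≤ (y - x) * (2 * C) := by
          apply mul_le_mul_of_nonneg_left (hd _ _) (by linarith)
      _ = 2 * C * (y - x) := by ring
  · have hmy1 : (m : ℝ) + 1 ≤ y := by
      have := Nat.floor_le hy0; rw [h] at this; push_cast at this; linarith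
    have : itp σ x - itp σ y =
        ((x - (m + 1) : ℝ) : ℂ) * (σ (m + 1) - σ m)
        - ((y - (m + 1) : ℝ) : ℂ) * (σ (m + 1 + 1) - σ (m + 1)) := by
      simp only [itp, h, ← hm]; push_cast; ring
    rw [this]
    calc ‖_‖ ≤ ‖((x - (m + 1) : ℝ) : ℂ) * (σ (m + 1) - σ m)‖
          + ‖((y - (m + 1) : ℝ) : ℂ) * (σ (m + 1 + 1) - σ (m + 1))‖ :=
        norm_sub_le _ _
      _ ≤ |x - (m + 1)| * (2 * C) + |y - (m + 1)| * (2 * C) := by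
          rw [norm_mul, norm_mul, Complex.norm_real, Complex.norm_real, Real.norm_eq_abs, Real.norm_eq_abs]
          gcongr <;> [exact hd _ _; exact hd _ _]
      _ = 2 * C * (y - x) := by
          rw [abs_of_nonpos (by linarith), abs_of_nonneg (by linarith)]; ring

lemma itp_abs_le (σ : ℕ → ℂ) {x : ℝ} (hx : 0 ≤ x) :
    ‖itp σ x‖ ≤
      max (‖σ ⌊x⌋₊‖) (‖σ (⌊x⌋₊ + 1)‖) := by
  set m := ⌊x⌋₊ with hm
  have hmx : (m : ℝ) ≤ x := Nat.floor_le hx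
  have hxm : x < m + 1 := Nat.lt_floor_add_one x
  set M := max (‖σ m‖) (‖σ (m + 1)‖) with hM
  have h1 : ‖σ m‖ ≤ M := le_max_left _ _
  have h2 : ‖σ (m + 1)‖ ≤ M := le_max_right _ _
  have : itp σ x = ((1 - (x - m) : ℝ) : ℂ) * σ m + ((x - m : ℝ) : ℂ) * σ (m + 1) := by
    simp only [itp, ← hm]; push_cast; ring
  rw [this]
  calc ‖_‖ ≤ ‖((1 - (x - m) : ℝ) : ℂ) * σ m‖
        + ‖((x - m : ℝ) : ℂ) * σ (m + 1)‖ := norm_add_le _ _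
    _ = |1 - (x - m)| * ‖σ m‖ + |x - m| * ‖σ (m + 1)‖ := by
        rw [norm_mul, norm_mul, Complex.norm_real, Complex.norm_real, Real.norm_eq_abs, Real.norm_eq_abs]
    _ ≤ (1 - (x - m)) * M + (x - m) * M := by
        rw [abs_of_nonneg (by linarith), abs_of_nonneg (by linarith)]
        gcongr <;> linarith
    _ = M := by ring

lemma itp_sub_floor (σ : ℕ → ℂ) (x : ℝ) :
    itp σ x - σ ⌊x⌋₊ = ((x - ⌊x⌋₊ : ℝ) : ℂ) * (σ (⌊x⌋₊ + 1) - σ ⌊x⌋₊) := by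
  simp [itp]

open scoped ENNReal NNReal

theorem stmt_5 (σ : ℕ → ℂ)
    (hb : ∃ C : ℝ, ∀ n : ℕ, ‖σ n‖ ≤ C)
    (huc : ∀ ε > (0 : ℝ), ∃ δ > (0 : ℝ), ∀ m n : ℕ,
      |Real.sqrt m - Real.sqrt n| ≤ δ → ‖σ m - σ n‖ ≤ ε) :
    ∃ f : ℝ → ℂ,
      (∀ n : ℕ, f n = σ n) ∧
      (∃ C : ℝ, ∀ x : ℝ, 0 ≤ x → ‖f x‖ ≤ C) ∧
      (∀ ε > (0 : ℝ), ∃ δ > (0 : ℝ), ∀ x y : ℝ, 0 ≤ x → 0 ≤ y →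
        |Real.sqrt x - Real.sqrt y| ≤ δ → ‖f x - f y‖ ≤ ε) ∧
      (⨆ x : ℝ, ⨆ _ : 0 ≤ x, (‖f x‖₊ : ℝ≥0∞)) = ⨆ n : ℕ, (‖σ n‖₊ : ℝ≥0∞) := by
  obtain ⟨C, hC⟩ := hb
  refine ⟨itp σ, fun n => itp_nat σ n,
    ⟨C, fun x hx => (itp_abs_le σ hx).trans (max_le (hC _) (hC _))⟩, ?_, ?_⟩
  · -- uniform continuity
    intro ε hε
    obtain ⟨δ₀, hδ₀pos, hδ₀⟩ := huc (ε / 3) (by linarith)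
    set C' := max C 1 with hC'def
    have hC'1 : (1 : ℝ) ≤ C' := le_max_right _ _
    have hC's : ∀ n, ‖σ n‖ ≤ C' := fun n => (hC n).trans (le_max_left _ _)
    obtain ⟨N, hNb⟩ := exists_nat_ge ((3 / δ₀) ^ 2)
    have hNs : 3 / δ₀ ≤ Real.sqrt N := by
      rw [show (3 / δ₀ : ℝ) = Real.sqrt ((3 / δ₀) ^ 2) from
        (Real.sqrt_sq (by positivity)).symm]
      exact Real.sqrt_le_sqrt hNb
    have hsNpos : 0 < Real.sqrt N := lt_of_lt_of_le (by positivity) hNs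
    have hinv : 1 / Real.sqrt N ≤ δ₀ / 3 := by
      rw [div_le_div_iff₀ hsNpos (by norm_num)]
      calc (1 : ℝ) * 3 = (3 / δ₀) * δ₀ := by field_simp
        _ ≤ Real.sqrt N * δ₀ := by gcongr
        _ = δ₀ * Real.sqrt N := mul_comm _ _
    set s := 2 * Real.sqrt N + 2 with hsdef
    have hs2 : (2 : ℝ) ≤ s := by nlinarith [Real.sqrt_nonneg (N : ℝ)]
    have hden : (0 : ℝ) < 2 * C' * s := by nlinarith
    set δ := min (δ₀ / 3) (min 1 ε / (2 * C' * s)) with hδdef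
    have hδpos : 0 < δ := by
      apply lt_min (by linarith)
      apply div_pos (lt_min one_pos hε) hden
    refine ⟨δ, hδpos, ?_⟩
    have hδ1 : δ ≤ δ₀ / 3 := min_le_left _ _
    have hδ2 : 2 * C' * s * δ ≤ min 1 ε := by
      have h := min_le_right (δ₀ / 3) (min 1 ε / (2 * C' * s))
      calc 2 * C' * s * δ ≤ 2 * C' * s * (min 1 ε / (2 * C' * s)) := by
            apply mul_le_mul_of_nonneg_left h (le_of_lt hden)
        _ = min 1 ε := by field_simp
    have hmin1 : min 1 ε ≤ 1 := min_le_left _ _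
    have hminε : min 1 ε ≤ ε := min_le_right _ _
    have hδ1' : δ ≤ 1 := by nlinarith
    have key : ∀ x y : ℝ, 0 ≤ x → x ≤ y → Real.sqrt y - Real.sqrt x ≤ δ →
        ‖itp σ x - itp σ y‖ ≤ ε := by
      intro x y hx hxy hρ
      have hy0 : 0 ≤ y := hx.trans hxy
      have hsxy : Real.sqrt x ≤ Real.sqrt y := Real.sqrt_le_sqrt hxy
      have hsx0 : 0 ≤ Real.sqrt x := Real.sqrt_nonneg _
      have hsy0 : 0 ≤ Real.sqrt y := Real.sqrt_nonneg _
      have hyx : y - x = (Real.sqrt y - Real.sqrt x) * (Real.sqrt y + Real.sqrt x) := by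
        nlinarith [Real.mul_self_sqrt hx, Real.mul_self_sqrt hy0]
      by_cases hxN : x < N
      · -- small case
        have hsxN : Real.sqrt x ≤ Real.sqrt N := Real.sqrt_le_sqrt (le_of_lt hxN)
        have hsyN : Real.sqrt y ≤ Real.sqrt N + 1 := by linarith
        have hsum : Real.sqrt y + Real.sqrt x ≤ s := by
          rw [hsdef]; linarith
        have hdiff : y - x ≤ δ * s := by
          rw [hyx]
          apply mul_le_mul hρ hsum (by linarith) (le_of_lt hδpos)
        have hy1 : y ≤ x + 1 := by nlinarith
        calc ‖itp σ x - itp σ y‖ ≤ 2 * C' * (y - x) :=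
              itp_lip σ C' hC's hx hxy hy1
          _ ≤ 2 * C' * (δ * s) := by
              apply mul_le_mul_of_nonneg_left hdiff (by linarith)
          _ = 2 * C' * s * δ := by ring
          _ ≤ ε := hδ2.trans hminε
      · -- large case
        push_neg at hxN
        have hNy : (N : ℝ) ≤ y := hxN.trans hxy
        set m := ⌊x⌋₊ with hm
        set k := ⌊y⌋₊ with hk
        have hmx : (m : ℝ) ≤ x := Nat.floor_le hx
        have hxm : x < m + 1 := Nat.lt_floor_add_one x
        have hky : (k : ℝ) ≤ y := Nat.floor_le hy0
        have hyk : y < k + 1 := Nat.lt_floor_add_one y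
        have hNm : (N : ℝ) ≤ (m : ℝ) := by
          exact_mod_cast Nat.le_floor (α := ℝ) (by exact_mod_cast hxN)
        have hNk : (N : ℝ) ≤ (k : ℝ) := by
          exact_mod_cast Nat.le_floor (α := ℝ) (by exact_mod_cast hNy)
        have hsNm : Real.sqrt N ≤ Real.sqrt m := Real.sqrt_le_sqrt hNm
        have hsNk : Real.sqrt N ≤ Real.sqrt k := Real.sqrt_le_sqrt hNk
        have hsmx : Real.sqrt m ≤ Real.sqrt x := Real.sqrt_le_sqrt hmx
        have hsky : Real.sqrt k ≤ Real.sqrt y := Real.sqrt_le_sqrt hky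
        -- bound √x - √m
        have hb1 : Real.sqrt x - Real.sqrt m ≤ 1 / Real.sqrt N := by
          calc Real.sqrt x - Real.sqrt m ≤ (x - m) / Real.sqrt x :=
                sqrt_sub_le (Nat.cast_nonneg m) hmx
            _ ≤ 1 / Real.sqrt N := by
                apply div_le_div₀ (by norm_num) (by linarith) hsNpos (by linarith)
        have hb2 : Real.sqrt y - Real.sqrt k ≤ 1 / Real.sqrt N := by
          calc Real.sqrt y - Real.sqrt k ≤ (y - k) / Real.sqrt y :=
                sqrt_sub_le (Nat.cast_nonneg k) hky
            _ ≤ 1 / Real.sqrt N := by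
                apply div_le_div₀ (by norm_num) (by linarith) hsNpos (by linarith)
        -- adjacent differences are small
        have hadj : ∀ j : ℕ, (N : ℝ) ≤ j → ‖σ (j + 1) - σ j‖ ≤ ε / 3 := by
          intro j hj
          apply hδ₀
          have hj1 : Real.sqrt N ≤ Real.sqrt ((j : ℝ) + 1) :=
            Real.sqrt_le_sqrt (by linarith)
          have hmono : Real.sqrt (j : ℝ) ≤ Real.sqrt ((j : ℝ) + 1) :=
            Real.sqrt_le_sqrt (by linarith)
          have hstep : Real.sqrt ((j : ℝ) + 1) - Real.sqrt (j : ℝ)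
              ≤ ((j : ℝ) + 1 - j) / Real.sqrt ((j : ℝ) + 1) :=
            sqrt_sub_le (Nat.cast_nonneg j) (by linarith)
          have h2 : ((j : ℝ) + 1 - j) / Real.sqrt ((j : ℝ) + 1) ≤ 1 / Real.sqrt N := by
            rw [show ((j : ℝ) + 1 - j) = 1 by ring]
            exact one_div_le_one_div_of_le hsNpos hj1
          push_cast
          rw [abs_of_nonneg (by linarith)]
          linarith
        have hσm : ‖σ (m + 1) - σ m‖ ≤ ε / 3 := hadj m hNm
        have hσk : ‖σ (k + 1) - σ k‖ ≤ ε / 3 := hadj k hNk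
        have h1 : ‖itp σ x - σ m‖ ≤ ε / 3 := by
          have e := itp_sub_floor σ x
          rw [← hm] at e
          rw [e, norm_mul, Complex.norm_real, Real.norm_eq_abs, abs_of_nonneg (by linarith)]
          have habs0 : 0 ≤ ‖σ (m + 1) - σ m‖ := norm_nonneg _
          nlinarith
        have h2 : ‖itp σ y - σ k‖ ≤ ε / 3 := by
          have e := itp_sub_floor σ y
          rw [← hk] at e
          rw [e, norm_mul, Complex.norm_real, Real.norm_eq_abs, abs_of_nonneg (by linarith)]
          have habs0 : 0 ≤ ‖σ (k + 1) - σ k‖ := norm_nonneg _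
          nlinarith
        have h3 : ‖σ m - σ k‖ ≤ ε / 3 := by
          apply hδ₀
          rw [abs_le]
          constructor <;> linarith
        calc ‖itp σ x - itp σ y‖
            = ‖(itp σ x - σ m) + (σ m - σ k) + (σ k - itp σ y)‖ := by
              congr 1; ring
          _ ≤ ‖(itp σ x - σ m) + (σ m - σ k)‖ + ‖σ k - itp σ y‖ :=
              norm_add_le _ _
          _ ≤ ‖itp σ x - σ m‖ + ‖σ m - σ k‖
              + ‖σ k - itp σ y‖ := by
              linarith [norm_add_le (itp σ x - σ m) (σ m - σ k)]
          _ ≤ ε / 3 + ε / 3 + ε / 3 := by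
              have : ‖σ k - itp σ y‖ = ‖itp σ y - σ k‖ :=
                norm_sub_rev _ _
              linarith [this ▸ h2]
          _ = ε := by ring
    intro x y hx hy hρ
    rcases le_total x y with h | h
    · apply key x y hx h
      have : Real.sqrt x ≤ Real.sqrt y := Real.sqrt_le_sqrt h
      rw [abs_sub_comm, abs_of_nonneg (by linarith)] at hρ
      exact hρ
    · rw [norm_sub_rev]
      apply key y x hy h
      have : Real.sqrt y ≤ Real.sqrt x := Real.sqrt_le_sqrt h
      rw [abs_of_nonneg (by linarith)] at hρ
      exact hρ
  · -- supremum equality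
    apply le_antisymm
    · refine iSup₂_le fun x hx => ?_
      have h := itp_abs_le σ hx
      have hcoe : ∀ k : ℕ, ‖itp σ x‖ ≤ ‖σ k‖ →
          (‖itp σ x‖₊ : ℝ≥0∞) ≤ ⨆ n : ℕ, (‖σ n‖₊ : ℝ≥0∞) := by
        intro k hk
        refine le_trans ?_ (le_iSup (fun n : ℕ => (‖σ n‖₊ : ℝ≥0∞)) k)
        exact_mod_cast ENNReal.coe_le_coe.2 (by
          rw [← NNReal.coe_le_coe, coe_nnnorm, coe_nnnorm]
          exact hk)
      rcases le_max_iff.1 h with h' | h'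
      · exact hcoe _ h'
      · exact hcoe _ h'
    · refine iSup_le fun n => ?_
      refine le_iSup₂_of_le (n : ℝ) (Nat.cast_nonneg n) (le_of_eq ?_)
      rw [itp_nat]
end

section
/- For every n ∈ ℕ, the L¹ distance between consecutive Gamma-density kernels equals ∫_0^∞ |r^{n-1}e^{-r}/(n−1)! − r^n e^{-r}/n!| dr = 2·n^n·e^{-n}/n!. -/
open MeasureTheory Set Real Filter

theorem stmt_6 (n : ℕ) (hn : 0 < n) :
    ∫ r in Set.Ioi (0 : ℝ),
        |r ^ (n - 1) * Real.exp (-r) / (Nat.factorial (n - 1)) -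
          r ^ n * Real.exp (-r) / (Nat.factorial n)| =
      2 * (n : ℝ) ^ n * Real.exp (-n) / (Nat.factorial n) := by
  set N : ℝ := (n : ℝ) with hN
  have hN0 : (0 : ℝ) < N := by rw [hN]; exact_mod_cast hn
  set f : ℝ → ℝ := fun r => r ^ (n - 1) * Real.exp (-r) / (Nat.factorial (n - 1)) -
      r ^ n * Real.exp (-r) / (Nat.factorial n) with hf
  set G : ℝ → ℝ := fun r => r ^ n * Real.exp (-r) / (Nat.factorial n) with hG
  have hfac1 : ((Nat.factorial (n - 1) : ℝ)) ≠ 0 := by positivity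
  have hfac2 : ((Nat.factorial n : ℝ)) ≠ 0 := by positivity
  have hfacmul : ((Nat.factorial n : ℝ)) = N * (Nat.factorial (n - 1)) := by
    have h1 : n - 1 + 1 = n := Nat.sub_add_cancel hn
    rw [← h1, Nat.factorial_succ, h1, hN]
    push_cast
    ring
  have hpow : ∀ r : ℝ, r ^ n = r ^ (n - 1) * r := by
    intro r
    conv_lhs => rw [← Nat.sub_add_cancel hn]
    rw [pow_succ]
  -- derivative
  have hderiv : ∀ r : ℝ, HasDerivAt G (f r) r := by
    intro r
    have h1 : HasDerivAt (fun r : ℝ => r ^ n * Real.exp (-r))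
        ((n : ℝ) * r ^ (n - 1) * Real.exp (-r) + r ^ n * (Real.exp (-r) * (-1))) r :=
      (hasDerivAt_pow n r).mul ((hasDerivAt_neg r).exp)
    have h2 := h1.div_const (Nat.factorial n : ℝ)
    refine h2.congr_deriv ?_
    symm
    rw [hf]
    field_simp [hfacmul]
    rw [hpow r]
    rw [hfacmul]
    ring
  -- integrability
  have hint : ∀ k : ℕ, IntegrableOn (fun r : ℝ => r ^ k * Real.exp (-r)) (Ioi 0) := by
    intro k
    have := Real.GammaIntegral_convergent (s := (k : ℝ) + 1) (by positivity)
    have heq : (fun x : ℝ => Real.exp (-x) * x ^ ((k : ℝ) + 1 - 1)) =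
        fun r : ℝ => r ^ k * Real.exp (-r) := by
      funext x
      rw [add_sub_cancel_right, Real.rpow_natCast, mul_comm]
    rwa [heq] at this
  have hfint : IntegrableOn f (Ioi 0) := by
    exact ((hint (n - 1)).div_const _).sub ((hint n).div_const _)
  -- sign facts
  have hsgn : ∀ r : ℝ, 0 ≤ r → f r = r ^ (n - 1) * Real.exp (-r) * (N - r) / Nat.factorial n := by
    intro r _
    rw [hf]
    field_simp [hfacmul]
    rw [hpow r]
    rw [hfacmul]
    ring
  -- split the integral
  rw [← Ioc_union_Ioi_eq_Ioi hN0.le,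
    setIntegral_union (Ioc_disjoint_Ioi le_rfl) measurableSet_Ioi
      ((hfint.mono_set (Ioc_subset_Ioi_self.trans (Ioi_subset_Ioi le_rfl))).abs)
      ((hfint.mono_set (Ioi_subset_Ioi hN0.le)).abs)]
  have h1 : ∫ r in Ioc 0 N, |f r| = G N - G 0 := by
    rw [setIntegral_congr_fun measurableSet_Ioc (g := f) (fun r hr => by
      rw [abs_of_nonneg]
      rw [hsgn r hr.1.le]
      have h3 : 0 ≤ N - r := by linarith [hr.2]
      have h4 : (0:ℝ) ≤ r ^ (n-1) * Real.exp (-r) :=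
        mul_nonneg (pow_nonneg hr.1.le _) (Real.exp_pos _).le
      exact div_nonneg (mul_nonneg h4 h3) (Nat.cast_nonneg _))]
    rw [← intervalIntegral.integral_of_le hN0.le]
    exact intervalIntegral.integral_eq_sub_of_hasDerivAt (fun r _ => hderiv r)
      (by rw [intervalIntegrable_iff_integrableOn_Ioc_of_le hN0.le]
          exact hfint.mono_set Ioc_subset_Ioi_self)
  have htend : Tendsto G atTop (nhds 0) := by
    have := (tendsto_pow_mul_exp_neg_atTop_nhds_zero n).div_const (Nat.factorial n : ℝ)
    simpa [hG, zero_div] using this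
  have h2 : ∫ r in Ioi N, |f r| = G N := by
    rw [setIntegral_congr_fun measurableSet_Ioi (g := fun r => -f r) (fun r hr => by
      rw [abs_of_nonpos]
      rw [hsgn r (hN0.le.trans (le_of_lt hr))]
      have h1 : N - r ≤ 0 := by linarith [mem_Ioi.mp hr]
      have h2 : (0:ℝ) ≤ r ^ (n-1) * Real.exp (-r) :=
        mul_nonneg (pow_nonneg ((hN0.trans (mem_Ioi.mp hr)).le) _) (Real.exp_pos _).le
      have := mul_nonpos_of_nonneg_of_nonpos h2 h1
      exact div_nonpos_of_nonpos_of_nonneg this (Nat.cast_nonneg _))]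
    rw [integral_neg]
    have := integral_Ioi_of_hasDerivAt_of_tendsto' (f := G) (f' := f) (a := N)
      (fun r _ => hderiv r) (hfint.mono_set (Ioi_subset_Ioi hN0.le)) htend
    rw [this]
    ring
  rw [h1, h2]
  have hG0 : G 0 = 0 := by
    simp [hG, zero_pow hn.ne']
  rw [hG0, hG]
  ring
end

section
/- For every bounded measurable function a : [0,∞) → ℂ with ‖a‖_∞ ≤ 1, and every n ∈ ℕ, the eigenvalue sequence γ_a(n) = (1/n!)·∫_0^∞ a(√r)·e^{-r}·r^n dr satisfies |γ_a(n) − γ_a(n−1)| ≤ ∫_0^∞ |r^n e^{-r}/n! − r^{n-1}e^{-r}/(n−1)!| dr = 2 n^n e^{-n}/n! ≤ √(2/(πn)). -/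
open MeasureTheory Set Real Filter

lemma int_pow_exp (k : ℕ) :
    IntegrableOn (fun r : ℝ => r ^ k * Real.exp (-r)) (Set.Ioi 0) := by
  have h := Real.GammaIntegral_convergent (s := (k : ℝ) + 1) (by positivity)
  refine h.congr_fun (fun x hx => ?_) measurableSet_Ioi
  rw [add_sub_cancel_right]; beta_reduce; rw [Real.rpow_natCast, mul_comm]

lemma integral_abs_diff (m : ℕ) :
    (∫ r in Set.Ioi (0 : ℝ),
        |r ^ (m+1) * Real.exp (-r) / (Nat.factorial (m+1)) -
          r ^ m * Real.exp (-r) / (Nat.factorial m)|) =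
      2 * ((m+1 : ℕ) : ℝ) ^ (m+1) * Real.exp (-((m+1:ℕ) : ℝ)) / (Nat.factorial (m+1)) := by
  set c : ℝ := ((m+1).factorial : ℝ) with hc
  have hcpos : (0:ℝ) < c := by positivity
  have hdpos : (0:ℝ) < (m.factorial : ℝ) := by positivity
  set N : ℝ := ((m+1 : ℕ) : ℝ) with hN
  have hNpos : (0:ℝ) < N := by positivity
  set f : ℝ → ℝ := fun r => r ^ (m+1) * Real.exp (-r) / c - r ^ m * Real.exp (-r) / (m.factorial : ℝ)
    with hfdef
  have hfact : c = (m+1) * (m.factorial : ℝ) := by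
    rw [hc, Nat.factorial_succ]; push_cast; ring
  have hf : ∀ r : ℝ, f r = Real.exp (-r) * (r ^ m * (r - N)) / c := by
    intro r
    rw [hfdef]
    simp only
    rw [hfact, hN]
    have h1 : ((m:ℝ) + 1) ≠ 0 := by positivity
    field_simp
    push_cast
    ring
  set K : ℝ → ℝ := fun r => r ^ (m+1) * Real.exp (-r) / c with hKdef
  have hK' : ∀ r : ℝ, HasDerivAt K (-f r) r := by
    intro r
    have h1 : HasDerivAt (fun r : ℝ => r ^ (m+1)) ((m+1) * r ^ m) r := by
      simpa using hasDerivAt_pow (m+1) r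
    have h2 : HasDerivAt (fun r : ℝ => Real.exp (-r)) (-Real.exp (-r)) r := by
      exact ((Real.hasDerivAt_exp (-r)).comp r (hasDerivAt_neg r)).congr_deriv (by ring)
    have h3 := (h1.mul h2).div_const c
    refine h3.congr_deriv ?_
    rw [hf r, hfact, hN]
    have h4 : ((m:ℝ) + 1) ≠ 0 := by positivity
    field_simp
    push_cast
    ring
  have hfint : IntegrableOn f (Set.Ioi 0) :=
    ((int_pow_exp (m+1)).div_const c).sub ((int_pow_exp m).div_const _)
  -- split the domain
  have hsplit : Set.Ioc (0:ℝ) N ∪ Set.Ioi N = Set.Ioi 0 := Set.Ioc_union_Ioi_eq_Ioi hNpos.le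
  have habs : IntegrableOn (fun r => |f r|) (Set.Ioi 0) := hfint.abs
  have hunion : (∫ r in Set.Ioi (0:ℝ), |f r|) =
      (∫ r in Set.Ioc (0:ℝ) N, |f r|) + ∫ r in Set.Ioi N, |f r| := by
    rw [← hsplit, setIntegral_union (Set.Ioc_disjoint_Ioi le_rfl) measurableSet_Ioi
      (habs.mono_set (hsplit ▸ Set.subset_union_left))
      (habs.mono_set (hsplit ▸ Set.subset_union_right))]
  -- first piece
  have hI1 : (∫ r in Set.Ioc (0:ℝ) N, |f r|) = K N - K 0 := by
    rw [← intervalIntegral.integral_of_le hNpos.le]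
    rw [show (∫ r in (0:ℝ)..N, |f r|) = ∫ r in (0:ℝ)..N, -f r from ?_]
    · have := intervalIntegral.integral_eq_sub_of_hasDerivAt
        (f := K) (f' := fun r => -f r) (a := (0:ℝ)) (b := N)
        (fun x _ => hK' x) ?_
      · rw [this]
      · apply ContinuousOn.intervalIntegrable
        apply Continuous.continuousOn
        fun_prop
    · apply intervalIntegral.integral_congr
      intro x hx
      rw [Set.uIcc_of_le hNpos.le] at hx
      simp only
      rw [abs_of_nonpos]
      rw [hf x]
      apply div_nonpos_of_nonpos_of_nonneg _ hcpos.le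
      have h5 : x - N ≤ 0 := by linarith [hx.2]
      have h6 : 0 ≤ x ^ m := pow_nonneg hx.1 m
      have h7 : x ^ m * (x - N) ≤ 0 := mul_nonpos_of_nonneg_of_nonpos h6 h5
      nlinarith [Real.exp_pos (-x)]
  -- second piece
  have hI2 : (∫ r in Set.Ioi N, |f r|) = K N := by
    have hcongr : (∫ r in Set.Ioi N, |f r|) = ∫ r in Set.Ioi N, f r := by
      apply setIntegral_congr_fun measurableSet_Ioi
      intro x hx
      simp only
      rw [abs_of_nonneg]
      rw [hf x]
      apply div_nonneg _ hcpos.le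
      have h5 : (0:ℝ) ≤ x - N := by simp only [Set.mem_Ioi] at hx; linarith
      have h6 : 0 ≤ x ^ m := pow_nonneg (by simp only [Set.mem_Ioi] at hx; nlinarith) m
      positivity
    rw [hcongr]
    have := integral_Ioi_of_hasDerivAt_of_tendsto
      (f := fun r => -K r) (f' := f) (a := N) (m := 0)
      (by apply Continuous.continuousWithinAt; fun_prop)
      (fun x _ => by exact (hK' x).neg.congr_deriv (neg_neg _))
      (hfint.mono_set (Set.Ioi_subset_Ioi hNpos.le))
      ?_
    · rw [this]; ring
    · have h7 := (tendsto_pow_mul_exp_neg_atTop_nhds_zero (m+1)).div_const c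
      rw [zero_div] at h7
      simpa using h7.neg
  have hK0 : K 0 = 0 := by simp [hKdef]
  have hKN : K N = N ^ (m+1) * Real.exp (-N) / c := rfl
  calc (∫ r in Set.Ioi (0 : ℝ),
        |r ^ (m+1) * Real.exp (-r) / (Nat.factorial (m+1)) -
          r ^ m * Real.exp (-r) / (Nat.factorial m)|)
      = ∫ r in Set.Ioi (0:ℝ), |f r| := rfl
    _ = (K N - K 0) + K N := by rw [hunion, hI1, hI2]
    _ = 2 * N ^ (m+1) * Real.exp (-N) / c := by rw [hK0, hKN]; ring

lemma stirling_bound (m : ℕ) :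
    2 * ((m + 1 : ℕ) : ℝ) ^ (m + 1) * Real.exp (-((m + 1 : ℕ) : ℝ)) / (Nat.factorial (m + 1)) ≤
      Real.sqrt (2 / (Real.pi * ((m + 1 : ℕ) : ℝ))) := by
  set N : ℝ := ((m + 1 : ℕ) : ℝ) with hN
  have hNpos : (0 : ℝ) < N := by positivity
  set c : ℝ := ((m + 1).factorial : ℝ) with hc
  have hcpos : 0 < c := by positivity
  set P : ℝ := (N / Real.exp 1) ^ (m + 1) with hP
  have hPpos : 0 < P := by positivity
  have hs : Real.sqrt Real.pi ≤ Stirling.stirlingSeq (m + 1) :=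
    Stirling.stirlingSeq'_antitone.le_of_tendsto
      ((Filter.tendsto_add_atTop_iff_nat 1).2 Stirling.tendsto_stirlingSeq_sqrt_pi) m
  rw [Stirling.stirlingSeq] at hs
  have h1 : Real.sqrt Real.pi * (Real.sqrt (2 * N) * P) ≤ c := by
    have := (le_div_iff₀ (by positivity : 0 < Real.sqrt (2 * N) * P)).1 hs
    exact this
  have h2 : Real.sqrt Real.pi * Real.sqrt (2 * N) = Real.sqrt (2 * Real.pi * N) := by
    rw [← Real.sqrt_mul Real.pi_pos.le]
    ring_nf
  have hR : Real.sqrt (2 / (Real.pi * N)) = 2 / Real.sqrt (2 * Real.pi * N) := by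
    rw [show (2 : ℝ) / (Real.pi * N) = 4 / (2 * Real.pi * N) by
      rw [div_eq_div_iff (by positivity) (by positivity)]; ring]
    rw [Real.sqrt_div (by norm_num : (0:ℝ) ≤ 4),
      show (4 : ℝ) = 2 ^ 2 by norm_num, Real.sqrt_sq (by norm_num : (0:ℝ) ≤ 2)]
  have hexp : Real.exp (-N) = ((Real.exp 1) ^ (m + 1))⁻¹ := by
    rw [Real.exp_neg, ← Real.exp_nat_mul, mul_one]
  have hLHS : 2 * N ^ (m + 1) * Real.exp (-N) / c = 2 * P / c := by
    rw [hexp, hP, div_pow]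
    field_simp
  rw [hLHS, hR]
  rw [div_le_div_iff₀ hcpos (by positivity)]
  have h3 : Real.sqrt (2 * Real.pi * N) * P ≤ c := by nlinarith [h1, h2]
  nlinarith [h3, Real.sqrt_nonneg (2 * Real.pi * N)]

theorem stmt_10 (a : ℝ → ℂ) (hm : Measurable a)
    (ha : ∀ r : ℝ, 0 ≤ r → ‖a r‖ ≤ 1) (n : ℕ) (hn : 0 < n)
    (γ : ℕ → ℂ)
    (hγ : ∀ k : ℕ, γ k = (Nat.factorial k : ℂ)⁻¹ *
      ∫ r in Set.Ioi (0 : ℝ), a (Real.sqrt r) * ((Real.exp (-r) * r ^ k : ℝ) : ℂ)) :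
    ‖γ n - γ (n - 1)‖ ≤
      (∫ r in Set.Ioi (0 : ℝ),
        |r ^ n * Real.exp (-r) / (Nat.factorial n) -
          r ^ (n - 1) * Real.exp (-r) / (Nat.factorial (n - 1))|) ∧
    (∫ r in Set.Ioi (0 : ℝ),
        |r ^ n * Real.exp (-r) / (Nat.factorial n) -
          r ^ (n - 1) * Real.exp (-r) / (Nat.factorial (n - 1))|) =
      2 * (n : ℝ) ^ n * Real.exp (-n) / (Nat.factorial n) ∧
    2 * (n : ℝ) ^ n * Real.exp (-n) / (Nat.factorial n) ≤ Real.sqrt (2 / (Real.pi * n)) := by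
  obtain ⟨m, rfl⟩ : ∃ m, n = m + 1 := ⟨n - 1, (Nat.succ_pred_eq_of_pos hn).symm⟩
  simp only [Nat.add_sub_cancel]
  refine ⟨?_, ?_, ?_⟩
  · -- Part 1
    set f : ℝ → ℝ := fun r =>
      r ^ (m+1) * Real.exp (-r) / ((m+1).factorial : ℝ) -
        r ^ m * Real.exp (-r) / (m.factorial : ℝ) with hfdef
    have hmeas : AEStronglyMeasurable (fun r : ℝ => a (Real.sqrt r))
        (volume.restrict (Set.Ioi 0)) :=
      (hm.comp Real.continuous_sqrt.measurable).aestronglyMeasurable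
    have hbdd : ∃ C, ∀ x : ℝ, ‖a (Real.sqrt x)‖ ≤ C :=
      ⟨1, fun x => ha _ (Real.sqrt_nonneg x)⟩
    have hgint : ∀ k : ℕ, IntegrableOn
        (fun r : ℝ => a (Real.sqrt r) * ((Real.exp (-r) * r ^ k : ℝ) : ℂ)) (Set.Ioi 0) := by
      intro k
      apply Integrable.bdd_mul _ hmeas (ae_of_all _ (fun x => ha _ (Real.sqrt_nonneg x)))
      have h0 : IntegrableOn (fun x : ℝ => ((x ^ k * Real.exp (-x) : ℝ) : ℂ)) (Set.Ioi 0) :=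
        (int_pow_exp k).ofReal
      refine h0.congr_fun (fun x _ => ?_) measurableSet_Ioi
      push_cast
      ring
    have key : γ (m+1) - γ m = ∫ r in Set.Ioi (0:ℝ), a (Real.sqrt r) * ((f r : ℝ) : ℂ) := by
      rw [hγ, hγ, ← integral_const_mul, ← integral_const_mul,
        ← integral_sub (((hgint (m+1)).const_mul _)) ((hgint m).const_mul _)]
      refine setIntegral_congr_fun measurableSet_Ioi (fun r _ => ?_)
      have h1 : ((m+1).factorial : ℂ) ≠ 0 := Nat.cast_ne_zero.2 (Nat.factorial_ne_zero _)
      have h2 : ((m).factorial : ℂ) ≠ 0 := Nat.cast_ne_zero.2 (Nat.factorial_ne_zero _)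
      simp only [hfdef]
      push_cast
      field_simp
    rw [key]
    calc ‖∫ r in Set.Ioi (0:ℝ), a (Real.sqrt r) * ((f r : ℝ) : ℂ)‖
        ≤ ∫ r in Set.Ioi (0:ℝ), ‖a (Real.sqrt r) * ((f r : ℝ) : ℂ)‖ :=
          norm_integral_le_integral_norm _
      _ ≤ ∫ r in Set.Ioi (0:ℝ), |f r| := by
          have hfint : IntegrableOn f (Set.Ioi 0) :=
            ((int_pow_exp (m+1)).div_const _).sub ((int_pow_exp m).div_const _)
          have hnormint : IntegrableOn
              (fun r => ‖a (Real.sqrt r) * ((f r : ℝ) : ℂ)‖) (Set.Ioi 0) := by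
            apply Integrable.norm
            apply Integrable.bdd_mul _ hmeas (ae_of_all _ (fun x => ha _ (Real.sqrt_nonneg x)))
            have h0 : IntegrableOn (fun x : ℝ => ((f x : ℝ) : ℂ)) (Set.Ioi 0) := hfint.ofReal
            exact h0
          refine setIntegral_mono_on hnormint hfint.abs measurableSet_Ioi (fun x _ => ?_)
          rw [norm_mul, Complex.norm_real]
          calc ‖a (Real.sqrt x)‖ * ‖f x‖ ≤ 1 * ‖f x‖ := by
                apply mul_le_mul_of_nonneg_right (ha _ (Real.sqrt_nonneg x)) (norm_nonneg _)
            _ = |f x| := by rw [one_mul, Real.norm_eq_abs]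
  · -- Part 2
    have := integral_abs_diff m
    push_cast at this ⊢
    exact this
  · -- Part 3
    have := stirling_bound m
    push_cast at this ⊢
    exact this
end

section
/- For every bounded measurable function a : [0,∞) → ℂ, the eigenvalue sequence γ_a(n) = (1/n!)·∫_0^∞ a(√r)·e^{-r}·r^n dr is Lipschitz continuous with respect to the square-root metric ρ(m,n) = |√m − √n| on ℤ≥0; in particular γ_a is bounded and uniformly continuous with respect to ρ. -/
open MeasureTheory Set

lemma mom_int (n : ℕ) : IntegrableOn (fun r : ℝ => Real.exp (-r) * r ^ n) (Set.Ioi 0) := by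
  have h := Real.GammaIntegral_convergent (s := (n : ℝ) + 1) (by positivity)
  simpa [Real.rpow_natCast] using h

lemma mom_eq (n : ℕ) :
    ∫ r in Set.Ioi (0:ℝ), Real.exp (-r) * r ^ n = n.factorial := by
  have h := Real.Gamma_eq_integral (s := (n : ℝ) + 1) (by positivity)
  have h2 := Real.Gamma_nat_eq_factorial n
  rw [h] at h2
  simpa [Real.rpow_natCast] using h2

lemma cint (a : ℝ → ℂ) (hm : Measurable a) {C : ℝ}
    (hC : ∀ r, 0 ≤ r → ‖a r‖ ≤ C) (n : ℕ) :
    IntegrableOn (fun r : ℝ => a (Real.sqrt r) * ((Real.exp (-r) * r ^ n : ℝ) : ℂ)) (Set.Ioi 0) := by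
  apply Integrable.bdd_mul ((mom_int n).ofReal)
  · exact (hm.comp Real.continuous_sqrt.measurable).aestronglyMeasurable
  · exact Filter.Eventually.of_forall (fun x => by simpa using hC _ (Real.sqrt_nonneg x))

lemma step_bound (a : ℝ → ℂ) (hm : Measurable a) {C : ℝ} (hC0 : 0 ≤ C)
    (hC : ∀ r, 0 ≤ r → ‖a r‖ ≤ C) (k : ℕ) :
    ‖(((k+1).factorial : ℂ))⁻¹ *
        (∫ r in Set.Ioi (0:ℝ), a (Real.sqrt r) * ((Real.exp (-r) * r ^ (k+1) : ℝ) : ℂ))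
      - ((k.factorial : ℂ))⁻¹ *
        (∫ r in Set.Ioi (0:ℝ), a (Real.sqrt r) * ((Real.exp (-r) * r ^ k : ℝ) : ℂ))‖
      ≤ C / Real.sqrt (k+1) := by
  set s : ℝ := Real.sqrt (k+1) with hsdef
  have hs : 0 < s := Real.sqrt_pos.mpr (by positivity)
  have hs2 : s ^ 2 = (k : ℝ) + 1 := by
    rw [hsdef]; rw [Real.sq_sqrt (by positivity)]
  -- the difference as a single integral
  set d : ℝ → ℝ := fun r => (((k+1).factorial : ℝ))⁻¹ * (Real.exp (-r) * r ^ (k+1))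
      - ((k.factorial : ℝ))⁻¹ * (Real.exp (-r) * r ^ k) with hd
  have h1 : ((((k+1).factorial : ℂ))⁻¹ *
        (∫ r in Set.Ioi (0:ℝ), a (Real.sqrt r) * ((Real.exp (-r) * r ^ (k+1) : ℝ) : ℂ))
      - ((k.factorial : ℂ))⁻¹ *
        (∫ r in Set.Ioi (0:ℝ), a (Real.sqrt r) * ((Real.exp (-r) * r ^ k : ℝ) : ℂ)))
      = ∫ r in Set.Ioi (0:ℝ), a (Real.sqrt r) * ((d r : ℝ) : ℂ) := by
    rw [← integral_const_mul, ← integral_const_mul,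
      ← integral_sub (((cint a hm hC (k+1)).const_mul _)) ((cint a hm hC k).const_mul _)]
    refine setIntegral_congr_fun measurableSet_Ioi fun r _ => ?_
    simp only [hd]
    push_cast
    ring
  rw [h1]
  -- dominating function
  set g : ℝ → ℝ := fun r => (C / (k+1).factorial) *
      (Real.exp (-r) * r ^ k * ((r - ((k:ℝ)+1)) ^ 2 / (2*s) + s/2)) with hg
  have hgrepr : g = fun r =>
      (C / ((k+1).factorial * (2*s))) * (Real.exp (-r) * r ^ (k+2))
      + (-(C * ((k:ℝ)+1) / ((k+1).factorial * s))) * (Real.exp (-r) * r ^ (k+1))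
      + ((C * (((k:ℝ)+1)^2 / (2*s) + s/2)) / (k+1).factorial) * (Real.exp (-r) * r ^ k) := by
    funext r
    simp only [hg]
    have : r ^ (k+2) = r ^ k * r ^ 2 := by ring
    field_simp
    ring
  have hgint : IntegrableOn g (Set.Ioi (0:ℝ)) := by
    rw [hgrepr]
    exact (((mom_int (k+2)).const_mul _).add ((mom_int (k+1)).const_mul _)).add
      ((mom_int k).const_mul _)
  have hbound : ∀ᵐ r ∂(volume.restrict (Set.Ioi (0:ℝ))),
      ‖a (Real.sqrt r) * ((d r : ℝ) : ℂ)‖ ≤ g r := by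
    filter_upwards [ae_restrict_mem measurableSet_Ioi] with r hr
    have hr0 : (0:ℝ) < r := hr
    have hfk : (0:ℝ) < (k+1).factorial := by positivity
    have hdr : d r = Real.exp (-r) * r ^ k * (r - ((k:ℝ)+1)) / (k+1).factorial := by
      simp only [hd]
      have hfs : ((k+1).factorial : ℝ) = ((k:ℝ)+1) * (k.factorial : ℝ) := by
        push_cast [Nat.factorial_succ]; ring
      have hfk0 : (0:ℝ) < k.factorial := by positivity
      rw [hfs]
      field_simp
      ring
    have habs : |r - ((k:ℝ)+1)| ≤ (r - ((k:ℝ)+1))^2 / (2*s) + s/2 := by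
      rw [div_add_div _ _ (by positivity) (by norm_num), le_div_iff₀ (by positivity)]
      nlinarith [sq_abs (r - ((k:ℝ)+1)), sq_nonneg (|r - ((k:ℝ)+1)| - s), abs_nonneg (r - ((k:ℝ)+1))]
    calc ‖a (Real.sqrt r) * ((d r : ℝ) : ℂ)‖
        = ‖a (Real.sqrt r)‖ * |d r| := by
          simp [norm_mul, Complex.norm_real]
      _ ≤ C * |d r| := by
          exact mul_le_mul_of_nonneg_right (hC _ (Real.sqrt_nonneg r)) (abs_nonneg _)
      _ = C * (Real.exp (-r) * r ^ k * |r - ((k:ℝ)+1)| / (k+1).factorial) := by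
          rw [hdr, abs_div, abs_mul, abs_of_nonneg (by positivity : (0:ℝ) ≤ Real.exp (-r) * r ^ k),
            abs_of_pos hfk]
      _ ≤ g r := by
          simp only [hg]
          rw [show C * (Real.exp (-r) * r ^ k * |r - ((k:ℝ)+1)| / ((k+1).factorial : ℝ))
              = C * (Real.exp (-r) * r ^ k * |r - ((k:ℝ)+1)|) / ((k+1).factorial : ℝ) from by ring]
          rw [show C / ((k+1).factorial : ℝ) * (Real.exp (-r) * r ^ k * ((r - ((k:ℝ)+1)) ^ 2 / (2*s) + s/2))
              = C * (Real.exp (-r) * r ^ k * ((r - ((k:ℝ)+1)) ^ 2 / (2*s) + s/2)) / ((k+1).factorial : ℝ) from by ring]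
          gcongr
  have := norm_integral_le_of_norm_le hgint hbound
  refine le_trans this ?_
  -- compute ∫ g
  simp only [hgrepr]
  have I1 : IntegrableOn (fun x : ℝ => C / (((k+1).factorial : ℝ) * (2*s)) * (Real.exp (-x) * x ^ (k+2))) (Set.Ioi 0) :=
    (mom_int (k+2)).const_mul _
  have I2 : IntegrableOn (fun x : ℝ => -(C * ((k:ℝ)+1) / (((k+1).factorial : ℝ) * s)) * (Real.exp (-x) * x ^ (k+1))) (Set.Ioi 0) :=
    (mom_int (k+1)).const_mul _
  have I3 : IntegrableOn (fun x : ℝ => C * (((k:ℝ)+1)^2 / (2*s) + s/2) / ((k+1).factorial : ℝ) * (Real.exp (-x) * x ^ k)) (Set.Ioi 0) :=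
    (mom_int k).const_mul _
  have I12 : IntegrableOn (fun x : ℝ => C / (((k+1).factorial : ℝ) * (2*s)) * (Real.exp (-x) * x ^ (k+2))
      + -(C * ((k:ℝ)+1) / (((k+1).factorial : ℝ) * s)) * (Real.exp (-x) * x ^ (k+1))) (Set.Ioi 0) := I1.add I2
  rw [integral_add I12 I3, integral_add I1 I2,
    integral_const_mul, integral_const_mul, integral_const_mul, mom_eq, mom_eq, mom_eq]
  have e2 : ((k+2).factorial : ℝ) = ((k:ℝ)+2) * (((k:ℝ)+1) * (k.factorial : ℝ)) := by
    push_cast [Nat.factorial_succ]; ring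
  have e1 : ((k+1).factorial : ℝ) = ((k:ℝ)+1) * (k.factorial : ℝ) := by
    push_cast [Nat.factorial_succ]; ring
  have hfk0 : (0:ℝ) < k.factorial := by positivity
  refine le_of_eq ?_
  rw [e2, e1, show ((k:ℝ)+2) = s^2 + 1 from by linarith, show ((k:ℝ)+1) = s^2 from by linarith]
  have hsne : s ≠ 0 := ne_of_gt hs
  have hmne : (k.factorial:ℝ) ≠ 0 := ne_of_gt hfk0
  field_simp
  ring

theorem stmt_11 (a : ℝ → ℂ) (hm : Measurable a)
    (hb : ∃ C : ℝ, ∀ r : ℝ, 0 ≤ r → ‖a r‖ ≤ C)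
    (γ : ℕ → ℂ)
    (hγ : ∀ k : ℕ, γ k = (Nat.factorial k : ℂ)⁻¹ *
      ∫ r in Set.Ioi (0 : ℝ), a (Real.sqrt r) * ((Real.exp (-r) * r ^ k : ℝ) : ℂ)) :
    (∃ C : ℝ, ∀ m n : ℕ,
      ‖γ m - γ n‖ ≤ C * |Real.sqrt m - Real.sqrt n|) ∧
    (∃ D : ℝ, ∀ n : ℕ, ‖γ n‖ ≤ D) ∧
    (∀ ε > (0 : ℝ), ∃ δ > (0 : ℝ), ∀ m n : ℕ,
      |Real.sqrt m - Real.sqrt n| ≤ δ → ‖γ m - γ n‖ ≤ ε) := by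
  obtain ⟨C, hC⟩ := hb
  have hC0 : 0 ≤ C := le_trans (norm_nonneg _) (hC 0 le_rfl)
  -- step bound with sqrt telescoping
  have hstep : ∀ k : ℕ, dist (γ k) (γ (k+1)) ≤
      2 * C * (Real.sqrt (k+1) - Real.sqrt k) := by
    intro k
    have h1 := step_bound a hm hC0 hC k
    rw [← hγ k, ← hγ (k+1)] at h1
    have h1' : dist (γ k) (γ (k+1)) ≤ C / Real.sqrt (k+1) := by
      rw [dist_comm, Complex.dist_eq]
      convert h1 using 3 <;> push_cast <;> ring
    refine h1'.trans ?_
    set s := Real.sqrt ((k:ℝ)+1) with hsdef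
    set t := Real.sqrt (k:ℝ) with htdef
    have hs : 0 < s := Real.sqrt_pos.mpr (by positivity)
    have hs2 : s ^ 2 = (k:ℝ)+1 := Real.sq_sqrt (by positivity)
    have ht2 : t ^ 2 = (k:ℝ) := Real.sq_sqrt (by positivity)
    have ht0 : 0 ≤ t := Real.sqrt_nonneg _
    rw [div_le_iff₀ hs]
    nlinarith [mul_nonneg hC0 (sq_nonneg (s - t))]
  -- Lipschitz
  have hlip : ∀ m n : ℕ, ‖γ m - γ n‖ ≤ 2 * C * |Real.sqrt m - Real.sqrt n| := by
    have key : ∀ m n : ℕ, m ≤ n →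
        dist (γ m) (γ n) ≤ 2 * C * (Real.sqrt n - Real.sqrt m) := by
      intro m n hmn
      have := dist_le_Ico_sum_of_dist_le hmn
        (d := fun i => 2 * C * (Real.sqrt (i+1) - Real.sqrt i))
        (fun {k} _ _ => hstep k)
      refine this.trans (le_of_eq ?_)
      rw [← Finset.mul_sum]
      congr 1
      have tr : ∀ N : ℕ, ∑ i ∈ Finset.range N,
          (Real.sqrt ((i:ℝ)+1) - Real.sqrt i) = Real.sqrt N := by
        intro N
        have h := Finset.sum_range_sub (f := fun j : ℕ => Real.sqrt j) N
        simpa using h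
      rw [Finset.sum_Ico_eq_sub _ hmn, tr, tr]
    intro m n
    rcases le_total m n with h | h
    · have := key m n h
      rw [dist_eq_norm] at this
      have habs : |Real.sqrt m - Real.sqrt n| = Real.sqrt n - Real.sqrt m := by
        rw [abs_sub_comm, abs_of_nonneg]
        exact sub_nonneg.mpr (Real.sqrt_le_sqrt (by exact_mod_cast h))
      rw [habs]
      simpa using this
    · have := key n m h
      rw [dist_eq_norm] at this
      have habs : |Real.sqrt m - Real.sqrt n| = Real.sqrt m - Real.sqrt n := by
        rw [abs_of_nonneg]
        exact sub_nonneg.mpr (Real.sqrt_le_sqrt (by exact_mod_cast h))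
      rw [habs, ← norm_neg]
      simpa [neg_sub] using this
  refine ⟨⟨2 * C, hlip⟩, ⟨C, ?_⟩, ?_⟩
  · -- boundedness
    intro n
    rw [hγ n]
    have hfk : (0:ℝ) < n.factorial := by positivity
    rw [norm_mul, norm_inv, Complex.norm_natCast]
    rw [inv_mul_le_iff₀ hfk]
    have hb2 : ‖∫ r in Set.Ioi (0:ℝ), a (Real.sqrt r) * ((Real.exp (-r) * r ^ n : ℝ) : ℂ)‖
        ≤ ∫ r in Set.Ioi (0:ℝ), C * (Real.exp (-r) * r ^ n) := by
      refine norm_integral_le_of_norm_le ((mom_int n).const_mul C) ?_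
      filter_upwards [ae_restrict_mem measurableSet_Ioi] with r hr
      have hr0 : (0:ℝ) < r := hr
      rw [norm_mul, Complex.norm_real, Real.norm_eq_abs,
        abs_of_nonneg (by positivity : (0:ℝ) ≤ Real.exp (-r) * r ^ n)]
      exact mul_le_mul_of_nonneg_right (hC _ (Real.sqrt_nonneg r)) (by positivity)
    rw [integral_const_mul, mom_eq] at hb2
    simpa [mul_comm] using hb2
  · -- uniform continuity
    intro ε hε
    refine ⟨ε / (2 * C + 1), by positivity, fun m n h => ?_⟩
    have := hlip m n
    have h2 : 2 * C * |Real.sqrt m - Real.sqrt n| ≤ 2 * C * (ε / (2 * C + 1)) :=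
      mul_le_mul_of_nonneg_left h (by positivity)
    have h3 : 2 * C * (ε / (2 * C + 1)) ≤ ε := by
      rw [mul_div_assoc'] at *
      rw [div_le_iff₀ (by positivity)]
      nlinarith
    linarith
end

section
/- Define F(x,y) = exp((2x² + 1)(ln y − ln x) + x² − y²) for x, y > 0. For every ε > 0 there exists h > 1 such that for all x ≥ 1, ∫_{u ∈ [−x,∞), |u| > h} F(x, x+u) du ≤ ε. -/
open Real Set MeasureTheory

lemma gauss_integrable (h : ℝ) (hh : 0 < h) :
    IntegrableOn (fun u : ℝ => Real.exp (-|u|)) {u : ℝ | h < |u|} := by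
  have hset : {u : ℝ | h < |u|} = Iio (-h) ∪ Ioi h := by
    ext u; simp [abs_lt, lt_abs, lt_neg, or_comm]
  rw [hset]
  apply IntegrableOn.union
  · have : IntegrableOn Real.exp (Iio (-h)) :=
      (integrableOn_exp_Iic (-h)).mono_set Iio_subset_Iic_self
    apply this.congr_fun ?_ measurableSet_Iio
    intro u hu
    simp only [mem_Iio] at hu
    show Real.exp u = Real.exp (-|u|)
    rw [abs_of_neg (by linarith), neg_neg]
  · have : IntegrableOn (fun u : ℝ => Real.exp (-1 * u)) (Ioi h) :=
      exp_neg_integrableOn_Ioi h one_pos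
    apply this.congr_fun ?_ measurableSet_Ioi
    intro u hu
    simp only [mem_Ioi] at hu
    show Real.exp (-1 * u) = Real.exp (-|u|)
    rw [abs_of_pos (by linarith)]
    ring_nf

theorem stmt_12
    (F : ℝ → ℝ → ℝ)
    (hF : ∀ x y : ℝ, 0 < x → 0 < y →
      F x y = Real.exp ((2 * x ^ 2 + 1) * (Real.log y - Real.log x) + x ^ 2 - y ^ 2))
    (ε : ℝ) (hε : 0 < ε) :
    ∃ h : ℝ, 1 < h ∧ ∀ x : ℝ, 1 ≤ x →
      ∫ u in {u : ℝ | -x ≤ u ∧ h < |u|}, F x (x + u) ≤ ε := by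
  refine ⟨max 2 (Real.log (2 / ε) + 1), lt_of_lt_of_le one_lt_two (le_max_left _ _), ?_⟩
  set h := max 2 (Real.log (2 / ε) + 1) with hh_def
  have hh2 : 2 ≤ h := le_max_left _ _
  have hhlog : Real.log (2 / ε) + 1 ≤ h := le_max_right _ _
  have hhpos : 0 < h := by linarith
  -- 2 * exp (-h) ≤ ε
  have htail : 2 * Real.exp (-h) ≤ ε := by
    have h1 : Real.exp (-h) ≤ Real.exp (-(Real.log (2 / ε) + 1)) :=
      Real.exp_le_exp.2 (by linarith)
    have h2 : Real.exp (-(Real.log (2 / ε) + 1)) = (ε / 2) * Real.exp (-1) := by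
      rw [neg_add, Real.exp_add, Real.exp_neg (Real.log (2 / ε)),
        Real.exp_log (by positivity)]
      field_simp
    have h3 : Real.exp (-1) ≤ 1 := by
      rw [Real.exp_le_one_iff]; norm_num
    nlinarith [Real.exp_pos (-1), Real.exp_pos (-h)]
  intro x hx
  have hxpos : 0 < x := by linarith
  set s : Set ℝ := {u : ℝ | -x ≤ u ∧ h < |u|} with hs_def
  have hs_meas : MeasurableSet s := by
    apply MeasurableSet.inter
    · exact measurableSet_Ici
    · exact measurableSet_lt measurable_const (measurable_id.abs)
  -- key pointwise bound for u in s, u ≠ -x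
  have key : ∀ u : ℝ, u ∈ s → u ≠ -x → F x (x + u) ≤ Real.exp (-|u|) := by
    intro u ⟨hu1, hu2⟩ hune
    have hux : -x < u := lt_of_le_of_ne hu1 (Ne.symm hune)
    have hy : 0 < x + u := by linarith
    rw [hF x (x + u) hxpos hy]
    apply Real.exp_le_exp.2
    have hlog : Real.log (x + u) - Real.log x ≤ u / x := by
      rw [← Real.log_div hy.ne' hxpos.ne']
      have := Real.log_le_sub_one_of_pos (show 0 < (x + u) / x by positivity)
      have : Real.log ((x + u) / x) ≤ (x + u) / x - 1 := this
      have heq : (x + u) / x - 1 = u / x := by field_simp; ring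
      linarith [heq ▸ this]
    have hc : (0:ℝ) < 2 * x ^ 2 + 1 := by positivity
    have step1 : (2 * x ^ 2 + 1) * (Real.log (x + u) - Real.log x) + x ^ 2 - (x + u) ^ 2
        ≤ (2 * x ^ 2 + 1) * (u / x) - 2 * x * u - u ^ 2 := by
      nlinarith [mul_le_mul_of_nonneg_left hlog hc.le]
    have heq2 : (2 * x ^ 2 + 1) * (u / x) - 2 * x * u - u ^ 2 = u / x - u ^ 2 := by
      field_simp; ring
    have habs : u / x ≤ |u| := by
      rcases le_or_gt 0 u with hu0 | hu0
      · exact le_trans (div_le_self hu0 hx) (le_abs_self u)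
      · have : u / x < 0 := div_neg_of_neg_of_pos hu0 hxpos
        linarith [abs_nonneg u]
    have habs2 : 2 ≤ |u| := by linarith
    have : u ^ 2 = |u| ^ 2 := (sq_abs u).symm
    nlinarith [sq_abs u]
  have hnonneg : ∀ u : ℝ, u ∈ s → u ≠ -x → 0 ≤ F x (x + u) := by
    intro u ⟨hu1, _⟩ hune
    have hux : -x < u := lt_of_le_of_ne hu1 (Ne.symm hune)
    have hy : 0 < x + u := by linarith
    rw [hF x (x + u) hxpos hy]
    exact (Real.exp_pos _).le
  have hae_ne : ∀ᵐ u : ℝ, u ≠ -x := by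
    have : (volume : Measure ℝ) {-x} = 0 := measure_singleton _
    filter_upwards [measure_eq_zero_iff_ae_notMem.mp this] with u hu
    simpa using hu
  have hgi : IntegrableOn (fun u : ℝ => Real.exp (-|u|)) {u : ℝ | h < |u|} :=
    gauss_integrable h hhpos
  have hsub : s ⊆ {u : ℝ | h < |u|} := fun u hu => hu.2
  have step_a : ∫ u in s, F x (x + u) ≤ ∫ u in s, Real.exp (-|u|) := by
    apply integral_mono_of_nonneg
    · rw [Filter.EventuallyLE, ae_restrict_iff' hs_meas]
      filter_upwards [hae_ne] with u hune hus
      exact hnonneg u hus hune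
    · exact hgi.mono_set hsub
    · rw [Filter.EventuallyLE, ae_restrict_iff' hs_meas]
      filter_upwards [hae_ne] with u hune hus
      exact key u hus hune
  have step_b : ∫ u in s, Real.exp (-|u|) ≤ ∫ u in {u : ℝ | h < |u|}, Real.exp (-|u|) := by
    apply setIntegral_mono_set hgi
    · filter_upwards with u using (Real.exp_pos _).le
    · exact HasSubset.Subset.eventuallyLE hsub
  have step_c : ∫ u in {u : ℝ | h < |u|}, Real.exp (-|u|) = 2 * Real.exp (-h) := by
    have hset : {u : ℝ | h < |u|} = Iio (-h) ∪ Ioi h := by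
      ext u; simp [abs_lt, lt_abs, lt_neg, or_comm]
    rw [hset, setIntegral_union (by
        rw [Set.disjoint_left]
        intro u hu1 hu2
        simp only [mem_Iio, mem_Ioi] at *
        linarith) measurableSet_Ioi
      ((gauss_integrable h hhpos).mono_set (by rw [hset]; exact subset_union_left))
      ((gauss_integrable h hhpos).mono_set (by rw [hset]; exact subset_union_right))]
    have e1 : ∫ u in Iio (-h), Real.exp (-|u|) = Real.exp (-h) := by
      rw [setIntegral_congr_fun measurableSet_Iio (g := Real.exp) (fun u hu => by
        simp only [mem_Iio] at hu
        rw [abs_of_neg (by linarith), neg_neg])]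
      rw [← integral_exp_Iic (-h)]
      exact setIntegral_congr_set Iio_ae_eq_Iic
    have e2 : ∫ u in Ioi h, Real.exp (-|u|) = Real.exp (-h) := by
      rw [setIntegral_congr_fun measurableSet_Ioi (g := fun u => Real.exp (-u))
        (fun u hu => by
          simp only [mem_Ioi] at hu
          rw [abs_of_pos (by linarith)])]
      exact integral_exp_neg_Ioi h
    rw [e1, e2]; ring
  calc ∫ u in s, F x (x + u) ≤ ∫ u in {u : ℝ | h < |u|}, Real.exp (-|u|) :=
        le_trans step_a step_b
    _ = 2 * Real.exp (-h) := step_c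
    _ ≤ ε := htail
end

section
/- Define F(x,y) = exp((2x²+1)(ln y − ln x) + x² − y²). Let h ≥ 1 and h < L < x and |u| ≤ h with x + u > 0. Then |F(x, x+u)·e^{2u²} − 1| ≤ e^{5h³/L} − 1. -/
lemma aux_abs_exp_sub_one_le (g : ℝ) : |Real.exp g - 1| ≤ Real.exp |g| - 1 := by
  have h1 := Real.add_one_le_exp g
  have h2 := Real.add_one_le_exp |g|
  have h3 : Real.exp g ≤ Real.exp |g| := Real.exp_le_exp.mpr (le_abs_self g)
  have h4 := neg_abs_le g
  rw [abs_le]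
  constructor <;> linarith

set_option maxHeartbeats 1600000 in
theorem stmt_13
    (F : ℝ → ℝ → ℝ)
    (hF : ∀ x y : ℝ, 0 < x → 0 < y →
      F x y = Real.exp ((2 * x ^ 2 + 1) * (Real.log y - Real.log x) + x ^ 2 - y ^ 2))
    (h L x u : ℝ) (hh : 1 ≤ h) (hhL : h < L) (hLx : L < x) (hu : |u| ≤ h)
    (hxu : 0 < x + u) :
    |F x (x + u) * Real.exp (2 * u ^ 2) - 1| ≤ Real.exp (5 * h ^ 3 / L) - 1 := by
  have hL : (0:ℝ) < L := by linarith
  have hx : (0:ℝ) < x := by linarith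
  set t : ℝ := u / x with htdef
  have hut : u = x * t := by rw [htdef, mul_div_assoc', mul_div_cancel_left₀ u hx.ne']
  have hxeq : x + u = x * (1 + t) := by rw [hut]; ring
  have h1t : 0 < 1 + t := by
    by_contra hc
    push_neg at hc
    nlinarith [hxu]
  have habs : |t| * x ≤ h := by
    have h1 : |t| = |u| / x := by rw [htdef, abs_div, abs_of_pos hx]
    rw [h1, div_mul_cancel₀ _ hx.ne']
    exact hu
  have htnn : (0:ℝ) ≤ |t| := abs_nonneg t
  have ht1 : |t| < 1 := by nlinarith
  -- rewrite the LHS as exp G - 1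
  have hlog : Real.log (x + u) = Real.log x + Real.log (1 + t) := by
    rw [hxeq, Real.log_mul hx.ne' h1t.ne']
  have hGeq : F x (x + u) * Real.exp (2 * u ^ 2)
      = Real.exp (2 * x ^ 2 * (Real.log (1 + t) - t + t ^ 2 / 2) + Real.log (1 + t)) := by
    rw [hF x (x + u) hx hxu, ← Real.exp_add]
    congr 1
    rw [hlog, hut]
    ring
  set l : ℝ := Real.log (1 + t) with hldef
  set G : ℝ := 2 * x ^ 2 * (l - t + t ^ 2 / 2) + l with hGdef
  rw [hGeq]
  clear_value G
  clear_value l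
  clear_value t
  have hB : 5 * h ^ 3 / x ≤ 5 * h ^ 3 / L :=
    div_le_div_of_nonneg_left (by nlinarith [pow_pos (show (0:ℝ) < h by linarith) 3]) hL hLx.le
  rcases le_or_gt |t| (2/5) with hcase | hcase
  · -- good case: |t| ≤ 2/5
    have hf : |l - t + t ^ 2 / 2| ≤ 5/3 * |t| ^ 3 := by
      have key := Real.abs_log_sub_add_sum_range_le (x := -t) (by rwa [abs_neg]) 2
      rw [abs_neg] at key
      have hsum : (∑ i ∈ Finset.range 2, (-t) ^ (i + 1) / (i + 1)) + Real.log (1 - -t)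
          = l - t + t ^ 2 / 2 := by
        rw [Finset.sum_range_succ, Finset.sum_range_succ, Finset.sum_range_zero]
        have : (1:ℝ) - -t = 1 + t := by ring
        rw [this, ← hldef]
        push_cast
        ring
      rw [hsum] at key
      have hden : (3:ℝ)/5 ≤ 1 - |t| := by linarith
      calc |l - t + t ^ 2 / 2| ≤ |t| ^ 3 / (1 - |t|) := key
        _ ≤ 5/3 * |t| ^ 3 := by
            rw [div_le_iff₀ (by linarith)]
            nlinarith [pow_nonneg htnn 3]
    have hlb : |l| ≤ 5/3 * |t| := by
      have key := Real.abs_log_sub_add_sum_range_le (x := -t) (by rwa [abs_neg]) 0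
      rw [abs_neg] at key
      simp only [Finset.sum_range_zero, zero_add, pow_one] at key
      have : (1:ℝ) - -t = 1 + t := by ring
      rw [this, ← hldef] at key
      calc |l| ≤ |t| / (1 - |t|) := key
        _ ≤ 5/3 * |t| := by
            rw [div_le_iff₀ (by linarith)]
            nlinarith
    have hGabs : |G| ≤ 5 * h ^ 3 / x := by
      have h5 : |G| ≤ 2 * x ^ 2 * |l - t + t ^ 2 / 2| + |l| := by
        rw [hGdef]
        calc |2 * x ^ 2 * (l - t + t ^ 2 / 2) + l|
            ≤ |2 * x ^ 2 * (l - t + t ^ 2 / 2)| + |l| := abs_add_le _ _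
          _ = 2 * x ^ 2 * |l - t + t ^ 2 / 2| + |l| := by
              rw [abs_mul, abs_of_nonneg (by positivity : (0:ℝ) ≤ 2 * x ^ 2)]
      rw [le_div_iff₀ hx]
      have e1 : x ^ 2 * |t| ^ 3 * x ≤ h ^ 3 := by
        have h6 : (|t| * x) ^ 3 ≤ h ^ 3 :=
          pow_le_pow_left₀ (by positivity) habs 3
        have h7 : x ^ 2 * |t| ^ 3 * x = (|t| * x) ^ 3 := by ring
        linarith
      have e2 : |t| * x ≤ h ^ 3 := by
        nlinarith [mul_nonneg (mul_nonneg (show (0:ℝ) ≤ h by linarith)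
          (show (0:ℝ) ≤ h - 1 by linarith)) (show (0:ℝ) ≤ h + 1 by linarith)]
      have s1 : |G| * x ≤ (2 * x ^ 2 * |l - t + t ^ 2 / 2| + |l|) * x :=
        mul_le_mul_of_nonneg_right h5 hx.le
      have s3 : x ^ 2 * |l - t + t ^ 2 / 2| * x ≤ x ^ 2 * (5/3 * |t| ^ 3) * x := by
        gcongr
      have s4 : |l| * x ≤ 5/3 * |t| * x := mul_le_mul_of_nonneg_right hlb hx.le
      have r1 : (2 * x ^ 2 * |l - t + t ^ 2 / 2| + |l|) * x
          = 2 * (x ^ 2 * |l - t + t ^ 2 / 2| * x) + |l| * x := by ring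
      have r2 : x ^ 2 * (5/3 * |t| ^ 3) * x = 5/3 * (x ^ 2 * |t| ^ 3 * x) := by ring
      have r3 : 5/3 * |t| * x = 5/3 * (|t| * x) := by ring
      linarith
    calc |Real.exp G - 1| ≤ Real.exp |G| - 1 := aux_abs_exp_sub_one_le G
      _ ≤ Real.exp (5 * h ^ 3 / L) - 1 := by
          have : |G| ≤ 5 * h ^ 3 / L := le_trans hGabs hB
          simpa using Real.exp_le_exp.mpr this
  · -- bad case: |t| > 2/5
    have hx5 : 2 * x < 5 * h := by
      nlinarith [mul_lt_mul_of_pos_right hcase hx]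
    have hh0 : (0:ℝ) < h := by linarith
    have hBbig : 2 * h ^ 2 < 5 * h ^ 3 / L := by
      rw [lt_div_iff₀ hL]
      nlinarith [mul_pos (pow_pos hh0 2) (show (0:ℝ) < 5 * h - 2 * L by linarith)]
    have hGub : G ≤ 2 * h ^ 2 := by
      have hlt : l ≤ t := by
        have := Real.log_le_sub_one_of_pos h1t
        linarith
      have hx2t2 : x ^ 2 * t ^ 2 ≤ h ^ 2 := by
        have : (|t| * x) ^ 2 ≤ h ^ 2 := by
          apply pow_le_pow_left₀ (by positivity) habs
        nlinarith [sq_abs t]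
      have htle : t ≤ 1 := le_trans (le_abs_self t) ht1.le
      nlinarith [mul_nonneg (sq_nonneg x) (sub_nonneg.2 hlt)]
    rw [abs_le]
    constructor
    · have hexp2 : (2:ℝ) < Real.exp (5 * h ^ 3 / L) := by
        have := Real.add_one_le_exp (5 * h ^ 3 / L)
        nlinarith
      have := Real.exp_pos G
      linarith
    · have : Real.exp G ≤ Real.exp (5 * h ^ 3 / L) :=
        Real.exp_le_exp.mpr (by linarith)
      linarith
end

section
/- Define F(x,y) = exp((2x²+1)(ln y − ln x) + x² − y²). Then lim_{x → ∞} ∫_0^∞ |F(x,y) − e^{−2(x−y)²}| dy = 0. -/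
open Real MeasureTheory Filter Set

lemma log_quad {v : ℝ} (hv : 0 < v) (hv1 : v ≤ 1) :
    Real.log v ≤ (v - 1) - (v - 1) ^ 2 / 2 := by
  rcases eq_or_lt_of_le hv1 with rfl | hv1
  · simp
  · set h : ℝ → ℝ := fun w => (w - 1) - (w - 1) ^ 2 / 2 - Real.log w with hh
    have hder : ∀ w ∈ interior (Icc v 1), HasDerivAt h (1 - (w - 1) - w⁻¹) w := by
      intro w hw
      rw [interior_Icc] at hw
      have hw0 : 0 < w := lt_trans hv hw.1
      have h1 : HasDerivAt (fun w : ℝ => w - 1) 1 w := (hasDerivAt_id w).sub_const 1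
      have h2 : HasDerivAt (fun w : ℝ => (w - 1) ^ 2 / 2) (w - 1) w := by
        have := (h1.pow 2).div_const 2
        refine this.congr_deriv ?_
        norm_num
      have := (h1.sub h2).sub (Real.hasDerivAt_log hw0.ne')
      exact this
    have hanti : AntitoneOn h (Icc v 1) := by
      apply antitoneOn_of_deriv_nonpos (convex_Icc v 1)
      · apply ContinuousOn.sub
        · fun_prop
        · apply Real.continuousOn_log.mono
          intro w hw
          simp only [Set.mem_compl_iff, Set.mem_singleton_iff]
          intro h0
          rw [h0] at hw
          exact absurd hw.1 (not_le.mpr hv)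
      · intro w hw
        exact (hder w hw).differentiableAt.differentiableWithinAt
      · intro w hw
        have hw0 : 0 < w := lt_trans hv (by rw [interior_Icc] at hw; exact hw.1)
        rw [(hder w hw).deriv]
        have key : (1 - (w - 1) - w⁻¹) * w = -(w - 1) ^ 2 := by
          field_simp
          ring
        nlinarith [sq_nonneg (w - 1)]
    have h1v := hanti (Set.mem_Icc.mpr ⟨le_refl v, hv1.le⟩) (Set.mem_Icc.mpr ⟨hv1.le, le_refl 1⟩) hv1.le
    simp only [hh, Real.log_one] at h1v
    norm_num at h1v
    linarith

lemma logA {x y : ℝ} (hy : 0 < y) (hyx : y ≤ x) :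
    x ^ 2 * (Real.log y - Real.log x) ≤ x * (y - x) - (y - x) ^ 2 / 2 := by
  have hx : 0 < x := lt_of_lt_of_le hy hyx
  have h := log_quad (div_pos hy hx) ((div_le_one hx).mpr hyx)
  rw [Real.log_div hy.ne' hx.ne'] at h
  have h2 := mul_le_mul_of_nonneg_left h (sq_nonneg x)
  refine h2.trans_eq ?_
  field_simp

lemma ineqI {x y : ℝ} (hy : 0 < y) (hyx : y ≤ x) :
    (2 * x ^ 2 + 1) * (Real.log y - Real.log x) + x ^ 2 - y ^ 2 ≤ -2 * (x - y) ^ 2 := by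
  have hA := logA hy hyx
  have hL0 : Real.log y - Real.log x ≤ 0 := by
    have : Real.log y ≤ Real.log x := Real.log_le_log hy hyx
    linarith
  nlinarith [hA, hL0]

lemma ineqII {x y : ℝ} (hx : 1 ≤ x) (hxy : x ≤ y) :
    (2 * x ^ 2 + 1) * (Real.log y - Real.log x) + x ^ 2 - y ^ 2 ≤ (y - x) - (y - x) ^ 2 := by
  have hx0 : (0:ℝ) < x := lt_of_lt_of_le one_pos hx
  have hy0 : (0:ℝ) < y := lt_of_lt_of_le hx0 hxy
  have hB : Real.log y - Real.log x ≤ y / x - 1 := by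
    have := Real.log_le_sub_one_of_pos (div_pos hy0 hx0)
    rwa [Real.log_div hy0.ne' hx0.ne'] at this
  have hB' : x * (Real.log y - Real.log x) ≤ y - x := by
    have h2 := mul_le_mul_of_nonneg_left hB hx0.le
    refine h2.trans_eq ?_
    field_simp
  have hL : Real.log y - Real.log x ≤ y - x := by
    rcases le_or_gt (Real.log y - Real.log x) 0 with h | h
    · linarith
    · calc Real.log y - Real.log x ≤ x * (Real.log y - Real.log x) :=
            le_mul_of_one_le_left h.le hx
        _ ≤ y - x := hB'
  have hxx : x * (x * (Real.log y - Real.log x)) ≤ x * (y - x) :=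
    mul_le_mul_of_nonneg_left hB' hx0.le
  nlinarith [hxx, hL]

lemma Etend (t : ℝ) :
    Filter.Tendsto (fun x : ℝ => (2 * x ^ 2 + 1) * (Real.log (t + x) - Real.log x)
      + x ^ 2 - (t + x) ^ 2) Filter.atTop (nhds (-2 * t ^ 2)) := by
  have hg : Filter.Tendsto (fun x : ℝ => ((2 * x ^ 2 + 1) * (Real.log (t + x) - Real.log x)
      + x ^ 2 - (t + x) ^ 2) + 2 * t ^ 2) Filter.atTop (nhds 0) := by
    apply squeeze_zero_norm' (a := fun x : ℝ => (|t| + t ^ 2 / 2 + 6 * |t| ^ 3) / x)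
    · filter_upwards [Filter.eventually_ge_atTop (1:ℝ),
        Filter.eventually_ge_atTop (2 * |t| + 1)] with x hx1 hx2
      have hx0 : (0:ℝ) < x := lt_of_lt_of_le one_pos hx1
      have htx : (0:ℝ) < t + x := by
        have := abs_nonneg t
        have := neg_abs_le t
        linarith
      set u : ℝ := t / x with hu
      have hu2 : |u| ≤ 1 / 2 := by
        rw [hu, abs_div, abs_of_pos hx0, div_le_div_iff₀ hx0 two_pos]
        have := abs_nonneg t
        linarith
      have hu1 : |(-u)| < 1 := by rw [abs_neg]; linarith
      have hr0 := Real.abs_log_sub_add_sum_range_le hu1 2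
      simp only [Finset.sum_range_succ, Finset.sum_range_zero] at hr0
      norm_num at hr0
      -- hr0 : |(-u) + u^2/2 + log (1 + u)| ≤ |u|^3 / (1 - |u|)  (roughly)
      set r : ℝ := Real.log (1 + u) - u + u ^ 2 / 2 with hrdef
      have hr : |r| ≤ 2 * |u| ^ 3 := by
        have h1 : r = -u + u ^ 2 / 2 + Real.log (1 + u) := by rw [hrdef]; ring
        rw [h1]
        refine hr0.trans ?_
        rw [div_le_iff₀ (by linarith : (0:ℝ) < 1 - |u|)]
        nlinarith [pow_nonneg (abs_nonneg u) 3]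
      have hL : Real.log (t + x) - Real.log x = Real.log (1 + u) := by
        rw [hu, show (1 : ℝ) + t / x = (t + x) / x by field_simp; ring]
        rw [Real.log_div htx.ne' hx0.ne']
      have hgeq : (2 * x ^ 2 + 1) * (Real.log (t + x) - Real.log x)
          + x ^ 2 - (t + x) ^ 2 + 2 * t ^ 2
          = t / x - t ^ 2 / (2 * x ^ 2) + (2 * x ^ 2 + 1) * r := by
        rw [hL]
        have hlog : Real.log (1 + u) = u - u ^ 2 / 2 + r := by rw [hrdef]; ring
        rw [hlog, hu]
        field_simp
        ring
      rw [Real.norm_eq_abs, hgeq]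
      have habs : |t / x - t ^ 2 / (2 * x ^ 2) + (2 * x ^ 2 + 1) * r|
          ≤ |t / x| + |t ^ 2 / (2 * x ^ 2)| + (2 * x ^ 2 + 1) * |r| := by
        calc |t / x - t ^ 2 / (2 * x ^ 2) + (2 * x ^ 2 + 1) * r|
            ≤ |t / x - t ^ 2 / (2 * x ^ 2)| + |(2 * x ^ 2 + 1) * r| := abs_add_le _ _
          _ ≤ |t / x| + |t ^ 2 / (2 * x ^ 2)| + |(2 * x ^ 2 + 1) * r| := by
              have := abs_sub (t / x) (t ^ 2 / (2 * x ^ 2))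
              linarith [abs_sub_abs_le_abs_sub (t/x) (t ^ 2 / (2 * x ^ 2)), abs_sub (t / x) (t ^ 2 / (2 * x ^ 2))]
          _ = |t / x| + |t ^ 2 / (2 * x ^ 2)| + (2 * x ^ 2 + 1) * |r| := by
              rw [abs_mul, abs_of_pos (show (0:ℝ) < 2 * x ^ 2 + 1 by positivity)]
      have t1 : |t / x| = |t| / x := by rw [abs_div, abs_of_pos hx0]
      have t2 : |t ^ 2 / (2 * x ^ 2)| ≤ (t ^ 2 / 2) / x := by
        rw [abs_of_nonneg (by positivity)]
        rw [div_div]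
        apply div_le_div_of_nonneg_left (sq_nonneg t) (by positivity)
        nlinarith
      have t3 : (2 * x ^ 2 + 1) * |r| ≤ (6 * |t| ^ 3) / x := by
        have h1 : (2 * x ^ 2 + 1) * |r| ≤ (3 * x ^ 2) * (2 * (|t| / x) ^ 3) := by
          apply mul_le_mul (by nlinarith) ?_ (abs_nonneg r) (by positivity)
          rw [hu, abs_div, abs_of_pos hx0] at hr
          exact hr
        have h2 : (3 * x ^ 2) * (2 * (|t| / x) ^ 3) = (6 * |t| ^ 3) / x := by
          field_simp
          ring
        linarith [h1, h2.le, h2.ge]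
      calc |t / x - t ^ 2 / (2 * x ^ 2) + (2 * x ^ 2 + 1) * r|
          ≤ |t / x| + |t ^ 2 / (2 * x ^ 2)| + (2 * x ^ 2 + 1) * |r| := habs
        _ ≤ |t| / x + (t ^ 2 / 2) / x + (6 * |t| ^ 3) / x := by
            rw [t1]; linarith
        _ = (|t| + t ^ 2 / 2 + 6 * |t| ^ 3) / x := by ring
    · exact Filter.Tendsto.div_atTop tendsto_const_nhds Filter.tendsto_id
  have h2 := hg.sub_const (2 * t ^ 2)
  rw [zero_sub] at h2
  have h3 := h2.congr (fun x : ℝ => by ring :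
    ∀ x : ℝ, ((2 * x ^ 2 + 1) * (Real.log (t + x) - Real.log x) + x ^ 2 - (t + x) ^ 2
      + 2 * t ^ 2) - 2 * t ^ 2
      = (2 * x ^ 2 + 1) * (Real.log (t + x) - Real.log x) + x ^ 2 - (t + x) ^ 2)
  rwa [show -(2 * t ^ 2) = -2 * t ^ 2 by ring] at h3

theorem stmt_14
    (F : ℝ → ℝ → ℝ)
    (hF : ∀ x y : ℝ, 0 < x → 0 < y →
      F x y = Real.exp ((2 * x ^ 2 + 1) * (Real.log y - Real.log x) + x ^ 2 - y ^ 2)) :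
    Filter.Tendsto
      (fun x : ℝ => ∫ y in Set.Ioi (0 : ℝ), |F x y - Real.exp (-2 * (x - y) ^ 2)|)
      Filter.atTop (nhds 0) := by
  set φ : ℝ → ℝ → ℝ := fun x y =>
    |Real.exp ((2 * x ^ 2 + 1) * (Real.log y - Real.log x) + x ^ 2 - y ^ 2)
      - Real.exp (-2 * (x - y) ^ 2)| with hφ
  set H : ℝ → ℝ → ℝ := fun x t => (Set.Ioi (0:ℝ)).indicator (φ x) (t + x) with hH
  set D : ℝ → ℝ := fun t => 2 * Real.exp (-2 * t ^ 2) + Real.exp (t - t ^ 2) with hD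
  have hmeas : ∀ᶠ x in Filter.atTop, AEStronglyMeasurable (H x) volume := by
    apply Filter.Eventually.of_forall
    intro x
    have hφm : Measurable (φ x) := by
      apply Measurable.abs
      apply Measurable.sub
      · apply Real.measurable_exp.comp
        apply Measurable.sub
        · exact ((Real.measurable_log.sub measurable_const).const_mul _).add measurable_const
        · exact measurable_id.pow_const 2
      · apply Real.measurable_exp.comp
        exact ((measurable_const.sub measurable_id).pow_const 2).const_mul _
    exact ((hφm.indicator measurableSet_Ioi).comp (measurable_add_const x)).aestronglyMeasurable
  have hbound : ∀ᶠ x in Filter.atTop, ∀ᵐ t ∂volume, ‖H x t‖ ≤ D t := by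
    filter_upwards [Filter.eventually_ge_atTop (1:ℝ)] with x hx1
    apply ae_of_all
    intro t
    by_cases htx : t + x ∈ Set.Ioi (0:ℝ)
    · have hy : (0:ℝ) < t + x := htx
      rw [hH]
      simp only [Set.indicator_of_mem htx]
      rw [Real.norm_eq_abs, abs_abs]
      have hGeq : -2 * (x - (t + x)) ^ 2 = -2 * t ^ 2 := by ring
      rw [hGeq]
      have hfE : Real.exp ((2 * x ^ 2 + 1) * (Real.log (t + x) - Real.log x) + x ^ 2 - (t + x) ^ 2)
          ≤ Real.exp (-2 * t ^ 2) + Real.exp (t - t ^ 2) := by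
        rcases le_total t 0 with ht | ht
        · have h := ineqI hy (show t + x ≤ x by linarith)
          rw [hGeq] at h
          have := Real.exp_le_exp.mpr h
          linarith [Real.exp_pos (t - t ^ 2)]
        · have h := ineqII hx1 (show x ≤ t + x by linarith)
          have heq : (t + x - x) - (t + x - x) ^ 2 = t - t ^ 2 := by ring
          rw [heq] at h
          have := Real.exp_le_exp.mpr h
          linarith [Real.exp_pos (-2 * t ^ 2)]
      refine abs_sub_le_iff.mpr ⟨?_, ?_⟩ <;>
        [skip; skip] <;>
        · simp only [hD]
          nlinarith [Real.exp_pos (-2 * t ^ 2), Real.exp_pos (t - t ^ 2),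
            Real.exp_pos ((2 * x ^ 2 + 1) * (Real.log (t + x) - Real.log x) + x ^ 2 - (t + x) ^ 2)]
    · rw [hH]
      simp only [Set.indicator_of_notMem htx]
      rw [norm_zero]
      simp only [hD]
      positivity
  have hint : Integrable D volume := by
    have i1 : Integrable (fun t : ℝ => Real.exp (-2 * t ^ 2)) volume :=
      integrable_exp_neg_mul_sq two_pos
    have i2 : Integrable (fun t : ℝ => Real.exp (t - t ^ 2)) volume := by
      have h : (fun t : ℝ => Real.exp (t - t ^ 2))
          = fun t => Real.exp ((1:ℝ)/4) * Real.exp (-1 * (t - 1/2) ^ 2) := by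
        funext t
        rw [← Real.exp_add]
        ring_nf
      rw [h]
      exact ((integrable_exp_neg_mul_sq one_pos).comp_sub_right ((1:ℝ)/2)).const_mul _
    exact (i1.const_mul 2).add i2
  have hlim : ∀ᵐ t ∂(volume : Measure ℝ),
      Filter.Tendsto (fun x => H x t) Filter.atTop (nhds 0) := by
    apply ae_of_all
    intro t
    have h2 : Filter.Tendsto (fun x : ℝ =>
        Real.exp ((2 * x ^ 2 + 1) * (Real.log (t + x) - Real.log x) + x ^ 2 - (t + x) ^ 2))
        Filter.atTop (nhds (Real.exp (-2 * t ^ 2))) :=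
      (Real.continuous_exp.tendsto _).comp (Etend t)
    have h3 := h2.sub (tendsto_const_nhds (x := Real.exp (-2 * t ^ 2)))
    rw [sub_self] at h3
    have h4 := h3.abs
    rw [abs_zero] at h4
    refine h4.congr' ?_
    filter_upwards [Filter.eventually_gt_atTop (-t)] with x hx
    have htx : t + x ∈ Set.Ioi (0:ℝ) := by simp; linarith
    rw [hH]
    simp only [Set.indicator_of_mem htx, hφ]
    rw [show -2 * (x - (t + x)) ^ 2 = -2 * t ^ 2 by ring]
  have key := MeasureTheory.tendsto_integral_filter_of_dominated_convergence
    (μ := volume) (F := H) (f := fun _ : ℝ => (0:ℝ)) D hmeas hbound hint hlim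
  rw [integral_zero] at key
  refine key.congr' ?_
  filter_upwards [Filter.eventually_gt_atTop (0:ℝ)] with x hx
  have step1 : (∫ t, H x t) = ∫ y, (Set.Ioi (0:ℝ)).indicator (φ x) y := by
    rw [hH]
    exact MeasureTheory.integral_add_right_eq_self ((Set.Ioi (0:ℝ)).indicator (φ x)) x
  have step2 : (∫ y, (Set.Ioi (0:ℝ)).indicator (φ x) y) = ∫ y in Set.Ioi (0:ℝ), φ x y :=
    MeasureTheory.integral_indicator measurableSet_Ioi
  rw [step1, step2]
  apply MeasureTheory.setIntegral_congr_fun measurableSet_Ioi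
  intro y hy
  simp only [hF x y hx hy, hφ]
end

section
/- With K(n,r) = r^n e^{-r}/n!, one has lim_{n → ∞} ∫_0^∞ |K(n, y²)·2y − √(2/π)·e^{−2(√n − y)²}| dy = 0. -/
open Real MeasureTheory Filter Set

noncomputable def fdens (n : ℕ) (y : ℝ) : ℝ :=
  (y ^ 2) ^ n * Real.exp (-(y ^ 2)) / (Nat.factorial n) * (2 * y)

noncomputable def gauss (u : ℝ) : ℝ := Real.sqrt (2 / Real.pi) * Real.exp (-2 * u ^ 2)

lemma fdens_integrableOn (n : ℕ) : IntegrableOn (fdens n) (Ioi 0) := by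
  have h := (integrableOn_rpow_mul_exp_neg_mul_sq (b := 1) (one_pos)
      (s := (2 * n + 1 : ℝ)) (by have := Nat.cast_nonneg (α := ℝ) n; linarith)).const_mul
      (2 / (Nat.factorial n))
  have h' : IntegrableOn (fun x : ℝ => 2 / (Nat.factorial n) *
      (x ^ ((2 * n + 1 : ℝ)) * Real.exp (-1 * x ^ 2))) (Ioi 0) := h
  refine h'.congr_fun (fun y hy => ?_) measurableSet_Ioi
  have hy' : (0:ℝ) < y := hy
  beta_reduce
  rw [show ((2 * n + 1 : ℝ)) = ((2 * n + 1 : ℕ) : ℝ) by push_cast; ring,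
    Real.rpow_natCast]
  unfold fdens
  rw [pow_add, pow_mul, pow_one]
  field_simp

lemma fdens_integral (n : ℕ) : ∫ y in Ioi (0:ℝ), fdens n y = 1 := by
  have h := integral_rpow_mul_exp_neg_rpow (p := 2) (q := (2 * n + 1 : ℝ)) two_pos
      (by have := Nat.cast_nonneg (α := ℝ) n; linarith)
  have h2 : ∫ y in Ioi (0:ℝ), fdens n y
      = ∫ y in Ioi (0:ℝ), (2 / (Nat.factorial n)) * (y ^ ((2 * n + 1 : ℝ)) * Real.exp (- y ^ (2:ℝ))) := by
    refine setIntegral_congr_fun measurableSet_Ioi (fun y hy => ?_)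
    have hy' : (0:ℝ) < y := hy
    rw [show ((2 * n + 1 : ℝ)) = ((2 * n + 1 : ℕ) : ℝ) by push_cast; ring,
      Real.rpow_natCast, show ((2:ℝ)) = ((2 : ℕ) : ℝ) by norm_num, Real.rpow_natCast]
    unfold fdens
    rw [pow_add, pow_mul, pow_one]
    field_simp
    ring
  rw [h2, integral_const_mul, h]
  rw [show (2 * (n:ℝ) + 1 + 1) / 2 = (n:ℝ) + 1 by ring]
  rw [show ((n:ℝ) + 1) = ((n:ℕ) + 1 : ℝ) by norm_num, Real.Gamma_nat_eq_factorial]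
  have : (Nat.factorial n : ℝ) ≠ 0 := by positivity
  field_simp

lemma gauss_integrable_s15 : Integrable gauss := by
  exact (integrable_exp_neg_mul_sq two_pos).const_mul _

lemma gauss_integral : ∫ u, gauss u = 1 := by
  unfold gauss
  rw [integral_const_mul, integral_gaussian]
  rw [← Real.sqrt_mul (by positivity)]
  rw [show (2 / π) * (π / 2) = 1 by field_simp [Real.pi_ne_zero], Real.sqrt_one]

lemma scheffe {f : ℕ → ℝ → ℝ} {g : ℝ → ℝ} (hfi : ∀ n, Integrable (f n))
    (hgi : Integrable g) (hfpos : ∀ n, ∀ᵐ x, 0 ≤ f n x)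
    (hae : ∀ᵐ x, Tendsto (fun n => f n x) atTop (nhds (g x)))
    (hint : Tendsto (fun n => ∫ x, f n x) atTop (nhds (∫ x, g x))) :
    Tendsto (fun n => ∫ x, |f n x - g x|) atTop (nhds 0) := by
  set h : ℕ → ℝ → ℝ := fun n x => max (g x - f n x) 0 with hh
  have hhi : ∀ n, Integrable (h n) := fun n => (hgi.sub (hfi n)).pos_part
  have hto : Tendsto (fun n => ∫ x, h n x) atTop (nhds 0) := by
    have := tendsto_integral_of_dominated_convergence (fun x => |g x|)
      (fun n => (hhi n).aestronglyMeasurable) hgi.abs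
      (F := h) (f := fun _ => (0:ℝ)) ?_ ?_
    · simpa using this
    · intro n
      filter_upwards [hfpos n] with x hx
      rw [Real.norm_eq_abs, abs_of_nonneg (le_max_right _ _)]
      exact max_le ((sub_le_self _ hx).trans (le_abs_self _)) (abs_nonneg _)
    · filter_upwards [hae] with x hx
      have : Tendsto (fun n => max (g x - f n x) 0) atTop (nhds (max (g x - g x) 0)) :=
        ((tendsto_const_nhds.sub hx).max tendsto_const_nhds)
      simpa using this
  have key : ∀ n, ∫ x, |f n x - g x| = ((∫ x, f n x) - ∫ x, g x) + 2 * ∫ x, h n x := by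
    intro n
    have h1 : Integrable (fun a => f n a - g a) := (hfi n).sub hgi
    have h2 : Integrable (fun a => 2 * h n a) := (hhi n).const_mul 2
    rw [← integral_sub (hfi n) hgi, ← integral_const_mul, ← integral_add h1 h2]
    refine integral_congr_ae (Eventually.of_forall fun x => ?_)
    show |f n x - g x| = f n x - g x + 2 * max (g x - f n x) 0
    rcases le_total (g x) (f n x) with hle | hle
    · rw [abs_of_nonneg (by linarith), max_eq_right (by linarith : g x - f n x ≤ 0)]
      ring
    · rw [abs_of_nonpos (by linarith), max_eq_left (by linarith : (0:ℝ) ≤ g x - f n x)]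
      ring
  simp only [key]
  have : Tendsto (fun n => ((∫ x, f n x) - ∫ x, g x) + 2 * ∫ x, h n x) atTop
      (nhds ((∫ x, g x) - (∫ x, g x) + 2 * 0)) :=
    (hint.sub tendsto_const_nhds).add (hto.const_mul 2)
  simpa using this
lemma sqrt_nat_tendsto : Tendsto (fun n : ℕ => Real.sqrt n) atTop atTop := by
  have h := (tendsto_rpow_atTop (y := (1:ℝ)/2) (by norm_num)).comp
    tendsto_natCast_atTop_atTop (α := ℕ)
  refine h.congr fun n => ?_
  simp only [Function.comp_apply]
  rw [Real.sqrt_eq_rpow]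

lemma log_expansion (u : ℝ) :
    Tendsto (fun n : ℕ => 2 * n * Real.log (1 + u / Real.sqrt n) - 2 * u * Real.sqrt n)
      atTop (nhds (-u ^ 2)) := by
  have key : Tendsto (fun n : ℕ =>
      (2 * n * Real.log (1 + u / Real.sqrt n) - 2 * u * Real.sqrt n) - (-u ^ 2))
      atTop (nhds 0) := by
    refine squeeze_zero_norm' ?_
      (Tendsto.div_atTop tendsto_const_nhds sqrt_nat_tendsto :
        Tendsto (fun n : ℕ => 4 * |u| ^ 3 / Real.sqrt n) atTop (nhds 0))
    filter_upwards [sqrt_nat_tendsto.eventually_ge_atTop (2 * |u| + 1)] with n hn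
    have hs1 : (1:ℝ) ≤ Real.sqrt n := by
      have : (0:ℝ) ≤ 2 * |u| := by positivity
      linarith
    have hs0 : (0:ℝ) < Real.sqrt n := by linarith
    have hsq : Real.sqrt n ^ 2 = (n:ℝ) := Real.sq_sqrt (Nat.cast_nonneg n)
    set x : ℝ := u / Real.sqrt n with hx
    have hxabs : |x| ≤ 1 / 2 := by
      rw [hx, abs_div, abs_of_pos hs0, div_le_div_iff₀ hs0 two_pos]
      linarith
    have hxlt : |(-x)| < 1 := by rw [abs_neg]; linarith
    have hkey := Real.abs_log_sub_add_sum_range_le hxlt 2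
    have hsum : (∑ i ∈ Finset.range 2, (-x) ^ (i + 1) / (i + 1)) = -x + x ^ 2 / 2 := by
      simp [Finset.sum_range_succ]
      ring
    rw [hsum, sub_neg_eq_add, abs_neg] at hkey
    -- hkey : |(-x + x^2/2) + log (1 + x)| ≤ |x|^3 / (1 - |x|)
    have hbound : |Real.log (1 + x) - x + x ^ 2 / 2| ≤ 2 * |x| ^ 3 := by
      have h1 : |Real.log (1 + x) - x + x ^ 2 / 2| = |(-x + x ^ 2 / 2) + Real.log (1 + x)| := by
        rw [show Real.log (1 + x) - x + x ^ 2 / 2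
          = (-x + x ^ 2 / 2) + Real.log (1 + x) by ring]
      rw [h1]
      refine hkey.trans ?_
      rw [abs_neg] at hxlt
      have h2 : (1:ℝ)/2 ≤ 1 - |x| := by linarith
      rw [div_le_iff₀ (by linarith)]
      norm_num
      nlinarith [mul_le_mul_of_nonneg_left h2 (pow_nonneg (abs_nonneg x) 3)]
    have hn0 : (0:ℝ) < (n:ℝ) := by rw [← hsq]; positivity
    have hnn : (n:ℝ) = Real.sqrt n * Real.sqrt n :=
      (Real.mul_self_sqrt (Nat.cast_nonneg n)).symm
    have heq : (2 * n * Real.log (1 + x) - 2 * u * Real.sqrt n) - (-u ^ 2)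
        = 2 * n * (Real.log (1 + x) - x + x ^ 2 / 2) := by
      have h1 : (n:ℝ) * x = u * Real.sqrt n := by
        rw [hx]; field_simp
        linear_combination u * hnn
      have h2 : (n:ℝ) * x ^ 2 = u ^ 2 := by
        rw [hx, div_pow, hsq]; field_simp [hn0.ne']
      linear_combination 2 * h1 - h2
    rw [heq, Real.norm_eq_abs, abs_mul, abs_of_nonneg (by positivity : (0:ℝ) ≤ 2 * n)]
    calc 2 * (n:ℝ) * |Real.log (1 + x) - x + x ^ 2 / 2| ≤ 2 * n * (2 * |x| ^ 3) := by
          exact mul_le_mul_of_nonneg_left hbound (by positivity)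
      _ = 4 * |u| ^ 3 / Real.sqrt n := by
          rw [hx, abs_div, abs_of_pos hs0, div_pow]
          rw [show Real.sqrt n ^ 3 = Real.sqrt n ^ 2 * Real.sqrt n by ring, hsq]
          field_simp
          ring
  have := key.add (tendsto_const_nhds (x := -u ^ 2))
  simpa using this

lemma tendsto_fdens (u : ℝ) :
    Tendsto (fun n : ℕ => fdens n (Real.sqrt n + u)) atTop (nhds (gauss u)) := by
  set P : ℕ → ℝ := fun n =>
    Real.exp (2 * n * Real.log (1 + u / Real.sqrt n) - 2 * u * Real.sqrt n) *
      Real.exp (-u ^ 2) * (2 * (Real.sqrt n + u) / (Real.sqrt 2 * Real.sqrt n)) /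
      Stirling.stirlingSeq n with hP
  have hPlim : Tendsto P atTop (nhds (gauss u)) := by
    have h1 : Tendsto (fun n : ℕ =>
        Real.exp (2 * n * Real.log (1 + u / Real.sqrt n) - 2 * u * Real.sqrt n)) atTop
        (nhds (Real.exp (-u ^ 2))) := (Real.continuous_exp.continuousAt.tendsto.comp
          (log_expansion u))
    have h3 : Tendsto (fun n : ℕ => 2 * (Real.sqrt n + u) / (Real.sqrt 2 * Real.sqrt n)) atTop
        (nhds (Real.sqrt 2)) := by
      have hu : Tendsto (fun n : ℕ => u / Real.sqrt n) atTop (nhds 0) :=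
        Tendsto.div_atTop tendsto_const_nhds sqrt_nat_tendsto
      have : Tendsto (fun n : ℕ => 2 / Real.sqrt 2 * (1 + u / Real.sqrt n)) atTop
          (nhds (2 / Real.sqrt 2 * (1 + 0))) :=
        tendsto_const_nhds.mul (tendsto_const_nhds.add hu)
      rw [show (2:ℝ) / Real.sqrt 2 * (1 + 0) = Real.sqrt 2 by
        rw [mul_add, mul_one, mul_zero, add_zero, Real.div_sqrt]] at this
      refine Tendsto.congr' ?_ this
      filter_upwards [sqrt_nat_tendsto.eventually_gt_atTop 0] with n hn
      have h22 : Real.sqrt 2 * Real.sqrt 2 = 2 := Real.mul_self_sqrt (by norm_num)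
      have h2ne : Real.sqrt 2 ≠ 0 := by positivity
      field_simp
    have h4 : Tendsto (fun n : ℕ => Stirling.stirlingSeq n) atTop (nhds (Real.sqrt π)) :=
      Stirling.tendsto_stirlingSeq_sqrt_pi
    have hπ : Real.sqrt π ≠ 0 := by positivity
    have h2c : Tendsto (fun _ : ℕ => Real.exp (-u ^ 2)) atTop (nhds (Real.exp (-u ^ 2))) :=
      tendsto_const_nhds
    have hval := ((h1.mul h2c).mul h3).div h4 hπ
    have hgauss : Real.exp (-u ^ 2) * Real.exp (-u ^ 2) * Real.sqrt 2 / Real.sqrt π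
        = gauss u := by
      unfold gauss
      rw [show (-2 : ℝ) * u ^ 2 = (-u ^ 2) + (-u ^ 2) by ring, Real.exp_add,
        Real.sqrt_div (by norm_num : (0:ℝ) ≤ 2)]
      ring
    rw [hgauss] at hval
    exact hval
  refine hPlim.congr' ?_
  filter_upwards [sqrt_nat_tendsto.eventually_ge_atTop (|u| + 1)] with n hn
  have hs1 : (1:ℝ) ≤ Real.sqrt n := by have := abs_nonneg u; linarith
  have hs0 : (0:ℝ) < Real.sqrt n := by linarith
  have hsq : Real.sqrt n ^ 2 = (n:ℝ) := Real.sq_sqrt (Nat.cast_nonneg n)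
  have hn0 : (0:ℝ) < (n:ℝ) := by rw [← hsq]; positivity
  have hpos : (0:ℝ) < 1 + u / Real.sqrt n := by
    have h1 : |u / Real.sqrt n| < 1 := by
      rw [abs_div, abs_of_pos hs0, div_lt_one hs0]; linarith
    linarith [(abs_lt.mp h1).1]
  set S := Stirling.stirlingSeq n with hSdef
  have hfact : (Nat.factorial n : ℝ)
      = S * (Real.sqrt 2 * Real.sqrt n * ((n:ℝ) ^ n * Real.exp (-(n:ℝ)))) := by
    have hden : Real.sqrt (2 * n) * ((n:ℝ) / Real.exp 1) ^ n
        = Real.sqrt 2 * Real.sqrt n * ((n:ℝ) ^ n * Real.exp (-(n:ℝ))) := by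
      rw [Real.sqrt_mul (by norm_num : (0:ℝ) ≤ 2), div_pow,
        show Real.exp 1 ^ n = Real.exp (n:ℝ) by
          rw [← Real.exp_nat_mul]; norm_num,
        Real.exp_neg]
      ring
    have hS : S = (Nat.factorial n : ℝ) / (Real.sqrt (2 * n) * ((n:ℝ) / Real.exp 1) ^ n) :=
      rfl
    rw [hS, hden]
    have h1 : Real.sqrt 2 * Real.sqrt n * ((n:ℝ) ^ n * Real.exp (-(n:ℝ))) ≠ 0 := by
      positivity
    field_simp
  have hSne : S ≠ 0 := by
    intro h
    rw [h, zero_mul] at hfact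
    exact (Nat.cast_pos.mpr (Nat.factorial_pos n)).ne' hfact
  show P n = fdens n (Real.sqrt n + u)
  have e1 : Real.exp (2 * (n:ℝ) * Real.log (1 + u / Real.sqrt n))
      = (1 + u / Real.sqrt n) ^ (2 * n) := by
    rw [show 2 * (n:ℝ) * Real.log (1 + u / Real.sqrt n)
        = ((2 * n : ℕ) : ℝ) * Real.log (1 + u / Real.sqrt n) by push_cast; ring,
      Real.exp_nat_mul, Real.exp_log hpos]
  have e2 : (1 + u / Real.sqrt n) = (Real.sqrt n + u) / Real.sqrt n := by
    field_simp
  have e3 : (Real.sqrt n + u) ^ 2 = (n:ℝ) + (2 * u * Real.sqrt n + u ^ 2) := by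
    linear_combination hsq
  have e4 : ((Real.sqrt n + u) ^ 2) ^ n = (Real.sqrt n + u) ^ (2 * n) :=
    (pow_mul _ 2 n).symm
  have e5 : Real.sqrt n ^ (2 * n) = (n:ℝ) ^ n := by
    rw [pow_mul, hsq]
  simp only [hP]
  unfold fdens
  rw [← hSdef, Real.exp_sub, e1, e2, div_pow, e5, e4, e3, hfact]
  rw [show -((n:ℝ) + (2 * u * Real.sqrt n + u ^ 2))
      = (-(n:ℝ)) + (-(2 * u * Real.sqrt n) + (-u ^ 2)) by ring,
    Real.exp_add, Real.exp_add, Real.exp_neg (2 * u * Real.sqrt n)]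
  have hE1 : Real.exp (-(n:ℝ)) ≠ 0 := Real.exp_ne_zero _
  have hE2 : Real.exp (2 * u * Real.sqrt n) ≠ 0 := Real.exp_ne_zero _
  have hE3 : Real.exp (-u ^ 2) ≠ 0 := Real.exp_ne_zero _
  have h2 : Real.sqrt 2 ≠ 0 := by positivity
  have hNn : (n:ℝ) ^ n ≠ 0 := by positivity
  field_simp
noncomputable def phi (n : ℕ) (u : ℝ) : ℝ :=
  (Ioi (-Real.sqrt n)).indicator (fun v => fdens n (Real.sqrt n + v)) u

lemma indicator_shift (n : ℕ) (h : ℝ → ℝ) (u : ℝ) :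
    (Ioi (0:ℝ)).indicator h (Real.sqrt n + u)
      = (Ioi (-Real.sqrt n)).indicator (fun v => h (Real.sqrt n + v)) u := by
  by_cases hu : -Real.sqrt n < u
  · rw [Set.indicator_of_mem (mem_Ioi.mpr (by linarith)) h,
      Set.indicator_of_mem (mem_Ioi.mpr hu)]
  · rw [Set.indicator_of_notMem (fun hc => hu (by simpa using (by linarith [mem_Ioi.mp hc] : -Real.sqrt n < u))),
      Set.indicator_of_notMem (fun hc => hu (mem_Ioi.mp hc))]

lemma phi_integral (n : ℕ) : ∫ u, phi n u = 1 := by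
  have key : ∫ u, phi n u = ∫ u, (Ioi (0:ℝ)).indicator (fdens n) (Real.sqrt n + u) := by
    refine integral_congr_ae (Eventually.of_forall fun u => ?_)
    exact (indicator_shift n (fdens n) u).symm
  rw [key, integral_add_left_eq_self ((Ioi (0:ℝ)).indicator (fdens n)) (Real.sqrt n),
    integral_indicator measurableSet_Ioi, fdens_integral]

lemma phi_integrable (n : ℕ) : Integrable (phi n) := by
  have h1 : Integrable ((Ioi (0:ℝ)).indicator (fdens n)) :=
    (integrable_indicator_iff measurableSet_Ioi).2 (fdens_integrableOn n)
  have h2 := h1.comp_add_left (Real.sqrt n)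
  refine h2.congr (Eventually.of_forall fun u => ?_)
  exact indicator_shift n (fdens n) u

lemma phi_nonneg (n : ℕ) (u : ℝ) : 0 ≤ phi n u := by
  refine Set.indicator_nonneg (fun v hv => ?_) u
  have hv' : 0 < Real.sqrt n + v := by have := mem_Ioi.mp hv; linarith
  unfold fdens
  have h1 : (0:ℝ) ≤ (Real.sqrt n + v) ^ 2 := sq_nonneg _
  positivity

lemma phi_tendsto (u : ℝ) : Tendsto (fun n => phi n u) atTop (nhds (gauss u)) := by
  refine (tendsto_fdens u).congr' ?_
  filter_upwards [sqrt_nat_tendsto.eventually_gt_atTop (-u)] with n hn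
  rw [phi, Set.indicator_of_mem (mem_Ioi.mpr (by linarith))]

lemma scheffe_applied :
    Tendsto (fun n => ∫ u, |phi n u - gauss u|) atTop (nhds 0) := by
  refine scheffe phi_integrable gauss_integrable_s15 (fun n => Eventually.of_forall (phi_nonneg n))
    (Eventually.of_forall phi_tendsto) ?_
  rw [gauss_integral]
  exact tendsto_const_nhds.congr (fun n => (phi_integral n).symm)

theorem stmt_15 :
    Filter.Tendsto
      (fun n : ℕ => ∫ y in Set.Ioi (0 : ℝ),
        |(y ^ 2) ^ n * Real.exp (-(y ^ 2)) / (Nat.factorial n) * (2 * y) -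
          Real.sqrt (2 / Real.pi) * Real.exp (-2 * (Real.sqrt n - y) ^ 2)|)
      Filter.atTop (nhds 0) := by
  have key : ∀ n : ℕ, (∫ y in Set.Ioi (0 : ℝ),
      |(y ^ 2) ^ n * Real.exp (-(y ^ 2)) / (Nat.factorial n) * (2 * y) -
        Real.sqrt (2 / Real.pi) * Real.exp (-2 * (Real.sqrt n - y) ^ 2)|)
      ≤ ∫ u, |phi n u - gauss u| := by
    intro n
    have step1 : (∫ y in Set.Ioi (0 : ℝ),
        |(y ^ 2) ^ n * Real.exp (-(y ^ 2)) / (Nat.factorial n) * (2 * y) -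
          Real.sqrt (2 / Real.pi) * Real.exp (-2 * (Real.sqrt n - y) ^ 2)|)
        = ∫ u, (Ioi (-Real.sqrt n)).indicator
            (fun v => |fdens n (Real.sqrt n + v) - gauss v|) u := by
      rw [← integral_indicator measurableSet_Ioi]
      rw [← integral_add_left_eq_self
        ((Ioi (0:ℝ)).indicator (fun y =>
          |(y ^ 2) ^ n * Real.exp (-(y ^ 2)) / (Nat.factorial n) * (2 * y) -
            Real.sqrt (2 / Real.pi) * Real.exp (-2 * (Real.sqrt n - y) ^ 2)|)) (Real.sqrt n)]
      refine integral_congr_ae (Eventually.of_forall fun u => ?_)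
      beta_reduce
      rw [indicator_shift]
      congr 1
      funext v
      rw [show Real.sqrt n - (Real.sqrt n + v) = -v by ring]
      unfold fdens gauss
      rw [show (-v) ^ 2 = v ^ 2 by ring]
    rw [step1]
    refine integral_mono_of_nonneg (Eventually.of_forall fun u => ?_)
      (((phi_integrable n).sub gauss_integrable_s15).abs) (Eventually.of_forall fun u => ?_)
    · exact Set.indicator_nonneg (fun v _ => abs_nonneg _) u
    · by_cases hu : u ∈ Ioi (-Real.sqrt n)
      · rw [Set.indicator_of_mem hu]
        unfold phi
        beta_reduce
        rw [Set.indicator_of_mem hu]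
      · rw [Set.indicator_of_notMem hu]
        exact abs_nonneg _
  refine squeeze_zero (fun n => ?_) key scheffe_applied
  exact integral_nonneg (fun y => abs_nonneg _)
end

section
/- Let a : [0,∞) → ℂ be bounded measurable with a(t) → 0 as t → ∞. Then γ_a(n) = (1/n!)·∫_0^∞ a(√r)·e^{-r}·r^n dr tends to 0 as n → ∞. -/
open MeasureTheory Filter Set

lemma aux_integrable (n : ℕ) :
    IntegrableOn (fun x : ℝ => Real.exp (-x) * x ^ n) (Set.Ioi 0) := by
  have h := Real.GammaIntegral_convergent (s := (n : ℝ) + 1) (by positivity)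
  refine h.congr_fun (fun x hx => ?_) measurableSet_Ioi
  simp only [add_sub_cancel_right, Real.rpow_natCast]

lemma aux_integral (n : ℕ) :
    ∫ x in Set.Ioi (0:ℝ), Real.exp (-x) * x ^ n = n.factorial := by
  rw [← Real.Gamma_nat_eq_factorial n,
    Real.Gamma_eq_integral (by positivity : (0:ℝ) < (n : ℝ) + 1)]
  refine setIntegral_congr_fun measurableSet_Ioi fun x hx => ?_
  rw [add_sub_cancel_right, Real.rpow_natCast]

theorem stmt_18 (a : ℝ → ℂ) (hm : Measurable a)
    (hb : ∃ C : ℝ, ∀ r : ℝ, 0 ≤ r → ‖a r‖ ≤ C)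
    (h0 : Filter.Tendsto a Filter.atTop (nhds 0)) :
    Filter.Tendsto
      (fun n : ℕ => (Nat.factorial n : ℂ)⁻¹ *
        ∫ r in Set.Ioi (0 : ℝ), a (Real.sqrt r) * ((Real.exp (-r) * r ^ n : ℝ) : ℂ))
      Filter.atTop (nhds 0) := by
  obtain ⟨C, hC⟩ := hb
  have hC0 : 0 ≤ C := le_trans (norm_nonneg _) (hC 0 le_rfl)
  -- measurability and integrability of the integrand
  set F : ℕ → ℝ → ℂ :=
    fun n r => a (Real.sqrt r) * ((Real.exp (-r) * r ^ n : ℝ) : ℂ) with hF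
  have hmeas : ∀ n : ℕ, AEStronglyMeasurable (F n) (volume.restrict (Set.Ioi 0)) := by
    intro n
    apply Measurable.aestronglyMeasurable
    exact (hm.comp Real.continuous_sqrt.measurable).mul
      (Complex.measurable_ofReal.comp
        ((Real.measurable_exp.comp measurable_neg).mul (measurable_id.pow_const n)))
  have hnorm : ∀ n : ℕ, ∀ r : ℝ, 0 < r →
      ‖F n r‖ = ‖a (Real.sqrt r)‖ * (Real.exp (-r) * r ^ n) := by
    intro n r hr
    rw [hF, norm_mul, Complex.norm_real, Real.norm_of_nonneg (by positivity)]
  have hint : ∀ n : ℕ, IntegrableOn (F n) (Set.Ioi 0) := by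
    intro n
    refine Integrable.mono' ((aux_integrable n).const_mul C) (hmeas n) ?_
    refine (ae_restrict_iff' measurableSet_Ioi).mpr (ae_of_all _ fun r hr => ?_)
    rw [hnorm n r hr]
    have h1 : ‖a (Real.sqrt r)‖ ≤ C := hC _ (Real.sqrt_nonneg r)
    have h2 : 0 ≤ Real.exp (-r) * r ^ n :=
      mul_nonneg (Real.exp_pos _).le (pow_nonneg (le_of_lt hr) n)
    exact mul_le_mul_of_nonneg_right h1 h2
  rw [NormedAddCommGroup.tendsto_nhds_zero]
  intro ε hε
  have hhalf : 0 < ε / 2 := by positivity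
  obtain ⟨L₀, hL₀⟩ :=
    eventually_atTop.mp ((NormedAddCommGroup.tendsto_nhds_zero.mp h0) (ε / 2) hhalf)
  set L : ℝ := max L₀ 0 with hLdef
  have hL0 : 0 ≤ L := le_max_right _ _
  set M : ℝ := L ^ 2 with hMdef
  have hM0 : 0 ≤ M := sq_nonneg L
  have hsmall : ∀ r : ℝ, M ≤ r → ‖a (Real.sqrt r)‖ ≤ ε / 2 := by
    intro r hr
    refine (hL₀ (Real.sqrt r) ?_).le
    exact le_trans (le_max_left _ _) (Real.le_sqrt_of_sq_le hr)
  -- the head term tends to zero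
  have htend : Tendsto (fun n : ℕ => C * M * (M ^ n / n.factorial)) atTop (nhds 0) := by
    simpa using (FloorSemiring.tendsto_pow_div_factorial_atTop M).const_mul (C * M)
  filter_upwards [htend.eventually_lt_const hhalf] with n hn
  -- split the integral
  have hsplit : (∫ r in Set.Ioi (0:ℝ), F n r) =
      (∫ r in Set.Ioc (0:ℝ) M, F n r) + ∫ r in Set.Ioi M, F n r := by
    rw [← setIntegral_union (Set.Ioc_disjoint_Ioi le_rfl) measurableSet_Ioi
      ((hint n).mono_set Set.Ioc_subset_Ioi_self)
      ((hint n).mono_set (Set.Ioi_subset_Ioi hM0)), Set.Ioc_union_Ioi_eq_Ioi hM0]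
  -- head estimate
  have hhead : ‖∫ r in Set.Ioc (0:ℝ) M, F n r‖ ≤ C * M ^ n * M := by
    have := norm_setIntegral_le_of_norm_le_const (μ := volume) (s := Set.Ioc (0:ℝ) M)
      (C := C * M ^ n) (by simp [Real.volume_Ioc])
      (f := F n) ?_
    · rwa [Measure.real, Real.volume_Ioc, sub_zero, ENNReal.toReal_ofReal hM0] at this
    · intro r hr
      rw [hnorm n r hr.1]
      have h1 : ‖a (Real.sqrt r)‖ ≤ C := hC _ (Real.sqrt_nonneg r)
      have h2 : Real.exp (-r) * r ^ n ≤ 1 * M ^ n := by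
        apply mul_le_mul
        · exact Real.exp_le_one_iff.mpr (by linarith [hr.1])
        · exact pow_le_pow_left₀ hr.1.le hr.2 n
        · exact pow_nonneg hr.1.le n
        · norm_num
      calc ‖a (Real.sqrt r)‖ * (Real.exp (-r) * r ^ n) ≤ C * (1 * M ^ n) :=
            mul_le_mul h1 h2 (mul_nonneg (Real.exp_pos _).le (pow_nonneg hr.1.le n)) hC0
        _ = C * M ^ n := by ring
  -- tail estimate
  have htail : ‖∫ r in Set.Ioi M, F n r‖ ≤ ε / 2 * n.factorial := by
    calc ‖∫ r in Set.Ioi M, F n r‖ ≤ ∫ r in Set.Ioi M, ‖F n r‖ :=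
          norm_integral_le_integral_norm _
      _ ≤ ∫ r in Set.Ioi M, ε / 2 * (Real.exp (-r) * r ^ n) := by
          refine setIntegral_mono_on
            (((hint n).mono_set (Set.Ioi_subset_Ioi hM0)).norm)
            (IntegrableOn.mono_set ((aux_integrable n).const_mul (ε / 2)) (Set.Ioi_subset_Ioi hM0))
            measurableSet_Ioi fun r hr => ?_
          have hr0 : 0 < r := lt_of_le_of_lt hM0 hr
          rw [hnorm n r hr0]
          exact mul_le_mul_of_nonneg_right (hsmall r hr.le) (by positivity)
      _ ≤ ∫ r in Set.Ioi (0:ℝ), ε / 2 * (Real.exp (-r) * r ^ n) := by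
          refine setIntegral_mono_set ((aux_integrable n).const_mul (ε / 2)) ?_
            ((Set.Ioi_subset_Ioi hM0).eventuallyLE)
          refine (ae_restrict_iff' measurableSet_Ioi).mpr (ae_of_all _ fun r hr => ?_)
          have : (0:ℝ) < r := hr
          positivity
      _ = ε / 2 * n.factorial := by
          rw [integral_const_mul, aux_integral n]
  -- combine
  have hfacpos : (0:ℝ) < n.factorial := by exact_mod_cast n.factorial_pos
  calc ‖(n.factorial : ℂ)⁻¹ * ∫ r in Set.Ioi (0:ℝ), F n r‖
      = (n.factorial : ℝ)⁻¹ * ‖∫ r in Set.Ioi (0:ℝ), F n r‖ := by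
        rw [norm_mul, norm_inv]
        norm_num
    _ ≤ (n.factorial : ℝ)⁻¹ * (C * M ^ n * M + ε / 2 * n.factorial) := by
        apply mul_le_mul_of_nonneg_left _ (by positivity)
        rw [hsplit]
        exact le_trans (norm_add_le _ _) (add_le_add hhead htail)
    _ = C * M * (M ^ n / n.factorial) + ε / 2 := by
        field_simp
    _ < ε := by linarith
end
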